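/- arXiv:1004.1500 — 4 statements merged into one kernel-verified Lean document; each statement's English description precedes it below -/
import Mathlib

section
/- Assume the nondegeneracy condition for the QVE Mx = a + b(x,x). Fix splittings b = b₁ + b₂ (b₁, b₂ bilinear, mapping pairs of nonnegative vectors to nonnegative vectors) and M = N − P (N an M-matrix, P ≥ 0), and set J(x) := N − b₁(·,x), g(x) := a + Px + b₂(x,x). Let x satisfy 0 ≤ x ≤ x* and F(x) ≤ 0, and let x' := J(x)⁻¹ g(x). Then for every vector y with x ≤ y ≤ x' and every vector g'' with g(x) ≤ g'' ≤ g(x'), the Gauss–Seidel-type update x^{GS} := J(y)⁻¹ g'' satisfies x' ≤ x^{GS} ≤ x*. -/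
open Matrix Filter Topology
open scoped ENNReal NNReal

/-- The spectral radius of a real square matrix: the supremum of the norms of
its complex eigenvalues. -/
noncomputable def specRad {n : ℕ} (A : Matrix (Fin n) (Fin n) ℝ) : ℝ :=
  sSup {r : ℝ | ∃ μ ∈ spectrum ℂ (A.map (Complex.ofReal)), ‖μ‖ = r}

/-- An M-matrix: a matrix of the form `s • 1 - P` with `P ≥ 0` and `ρ(P) ≤ s`. -/
def IsMMat {n : ℕ} (A : Matrix (Fin n) (Fin n) ℝ) : Prop :=
  ∃ (s : ℝ) (P : Matrix (Fin n) (Fin n) ℝ),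
    (∀ i j, 0 ≤ P i j) ∧ specRad P ≤ s ∧ A = s • (1 : Matrix (Fin n) (Fin n) ℝ) - P

/-- A nonsingular M-matrix: an M-matrix that is invertible. -/
def IsNsMMat {n : ℕ} (A : Matrix (Fin n) (Fin n) ℝ) : Prop :=
  IsMMat A ∧ IsUnit A.det

lemma tendsto_inv_entry {n : ℕ} (A : Matrix (Fin n) (Fin n) ℝ) (hdet : A.det ≠ 0)
    (i j : Fin n) :
    Filter.Tendsto (fun m : ℕ => (A + (1 / (m + 1) : ℝ) • 1)⁻¹ i j) atTop (𝓝 (A⁻¹ i j)) := by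
  have hB : Tendsto (fun m : ℕ => A + (1 / (m + 1) : ℝ) • (1 : Matrix (Fin n) (Fin n) ℝ))
      atTop (𝓝 A) := by
    apply tendsto_pi_nhds.mpr
    intro i'
    apply tendsto_pi_nhds.mpr
    intro j'
    simp only [Matrix.add_apply, Matrix.smul_apply, smul_eq_mul]
    have h1 := tendsto_one_div_add_atTop_nhds_zero_nat.mul_const
      ((1 : Matrix (Fin n) (Fin n) ℝ) i' j')
    simpa using tendsto_const_nhds.add h1
  have hcont : ContinuousAt Inv.inv A := by
    apply continuousAt_matrix_inv
    rw [Ring.inverse_eq_inv']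
    exact continuousAt_inv₀ hdet
  have hinv := (hcont.tendsto).comp hB
  exact (tendsto_pi_nhds.mp (tendsto_pi_nhds.mp hinv i)) j

namespace QVEAux

attribute [local instance] Matrix.linftyOpNormedAddCommGroup Matrix.linftyOpNormedRing
  Matrix.linftyOpNormedAlgebra

variable {n : ℕ}

instance : CompleteSpace (Matrix (Fin n) (Fin n) ℂ) :=
  FiniteDimensional.complete ℂ _

lemma nnnorm_map (X : Matrix (Fin n) (Fin n) ℝ) : ‖X.map (Complex.ofReal)‖₊ = ‖X‖₊ := by
  rw [Matrix.linfty_opNNNorm_def, Matrix.linfty_opNNNorm_def]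
  congr 1; ext i; congr 1; ext j
  simp [Matrix.map_apply, Complex.nnnorm_real]

lemma entry_nnnorm_le (X : Matrix (Fin n) (Fin n) ℝ) (i j : Fin n) : ‖X i j‖₊ ≤ ‖X‖₊ := by
  rw [Matrix.linfty_opNNNorm_def]
  refine le_trans (Finset.single_le_sum (f := fun j => ‖X i j‖₊) (fun _ _ => zero_le)
    (Finset.mem_univ j)) (Finset.le_sup (f := fun i => ∑ j, ‖X i j‖₊) (Finset.mem_univ i))

lemma entry_abs_le (X : Matrix (Fin n) (Fin n) ℝ) (i j : Fin n) : |X i j| ≤ ‖X‖ := by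
  have := entry_nnnorm_le X i j
  have h2 : ‖X i j‖ ≤ ‖X‖ := by exact_mod_cast this
  simpa [Real.norm_eq_abs] using h2

lemma nnnorm_mono {Q P : Matrix (Fin n) (Fin n) ℝ} (h : ∀ i j, ‖Q i j‖₊ ≤ ‖P i j‖₊) :
    ‖Q‖₊ ≤ ‖P‖₊ := by
  rw [Matrix.linfty_opNNNorm_def, Matrix.linfty_opNNNorm_def]
  exact Finset.sup_mono_fun fun i _ => Finset.sum_le_sum fun j _ => h i j

lemma bridge (hn : 0 < n) (X : Matrix (Fin n) (Fin n) ℝ) :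
    0 ≤ specRad X ∧ ENNReal.ofReal (specRad X) = spectralRadius ℂ (X.map Complex.ofReal) ∧
      ∀ μ ∈ spectrum ℂ (X.map Complex.ofReal), ‖μ‖ ≤ specRad X := by
  haveI : Nonempty (Fin n) := ⟨⟨0, hn⟩⟩
  obtain ⟨z, hz, hzr⟩ := spectrum.exists_nnnorm_eq_spectralRadius (X.map Complex.ofReal)
  have hub : ∀ μ ∈ spectrum ℂ (X.map Complex.ofReal), ‖μ‖ ≤ ‖z‖ := by
    intro μ hμ
    have h1 : (‖μ‖₊ : ℝ≥0∞) ≤ spectralRadius ℂ (X.map Complex.ofReal) := by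
      rw [spectralRadius]
      exact le_iSup₂ (f := fun k (_ : k ∈ spectrum ℂ (X.map Complex.ofReal)) => (‖k‖₊ : ℝ≥0∞)) μ hμ
    rw [← hzr] at h1
    exact_mod_cast h1
  have hspec : specRad X = ‖z‖ := by
    apply IsGreatest.csSup_eq
    exact ⟨⟨z, hz, rfl⟩, by rintro r ⟨μ, hμ, rfl⟩; exact hub μ hμ⟩
  refine ⟨hspec ▸ norm_nonneg z, ?_, fun μ hμ => hspec ▸ hub μ hμ⟩
  rw [hspec, ofReal_norm, enorm_eq_nnnorm, hzr]

lemma gelfand (X : Matrix (Fin n) (Fin n) ℝ) :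
    Tendsto (fun k : ℕ => (‖X ^ k‖₊ : ℝ≥0∞) ^ (1 / k : ℝ)) atTop
      (𝓝 (spectralRadius ℂ (X.map Complex.ofReal))) := by
  have h := spectrum.pow_nnnorm_pow_one_div_tendsto_nhds_spectralRadius
    (X.map Complex.ofReal)
  have hmap : ∀ k : ℕ, (X.map Complex.ofReal) ^ k = (X ^ k).map Complex.ofReal := by
    intro k
    have : X.map Complex.ofReal = Complex.ofRealHom.mapMatrix X := rfl
    simp only [this, ← map_pow]; rfl
  convert h using 2 with k
  rw [hmap, nnnorm_map]


lemma eventually_norm_pow_le {X : Matrix (Fin n) (Fin n) ℝ} {r : ℝ≥0}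
    (hr : spectralRadius ℂ (X.map Complex.ofReal) < r) :
    ∀ᶠ k : ℕ in atTop, (‖X ^ k‖₊ : ℝ≥0) ≤ r ^ k := by
  have h := (gelfand X).eventually_lt_const hr
  filter_upwards [h, Filter.eventually_gt_atTop 0] with k hk hk0
  have h1 : ((‖X ^ k‖₊ : ℝ≥0∞) ^ (1 / k : ℝ)) ^ (k : ℝ) < (r : ℝ≥0∞) ^ (k : ℝ) :=
    ENNReal.rpow_lt_rpow hk (by positivity)
  rw [← ENNReal.rpow_mul, one_div,
    inv_mul_cancel₀ (by exact_mod_cast hk0.ne' : (k : ℝ) ≠ 0), ENNReal.rpow_one,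
    ENNReal.rpow_natCast] at h1
  have := h1.le
  rw [← ENNReal.coe_pow] at this
  exact_mod_cast this

lemma entry_pow_nonneg {P : Matrix (Fin n) (Fin n) ℝ} (hP : ∀ i j, 0 ≤ P i j) (k : ℕ) :
    ∀ i j, 0 ≤ (P ^ k) i j := by
  induction k with
  | zero => intro i j; by_cases h : i = j <;> simp [pow_zero, Matrix.one_apply, h]
  | succ m ih =>
    intro i j
    rw [pow_succ, Matrix.mul_apply]
    exact Finset.sum_nonneg fun l _ => mul_nonneg (ih i l) (hP l j)

lemma entry_pow_mono {Q P : Matrix (Fin n) (Fin n) ℝ} (hQ : ∀ i j, 0 ≤ Q i j)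
    (hQP : ∀ i j, Q i j ≤ P i j) (k : ℕ) : ∀ i j, (Q ^ k) i j ≤ (P ^ k) i j := by
  induction k with
  | zero => intro i j; simp [pow_zero]
  | succ m ih =>
    intro i j
    rw [pow_succ, pow_succ, Matrix.mul_apply, Matrix.mul_apply]
    refine Finset.sum_le_sum fun l _ => ?_
    have h1 : 0 ≤ (Q ^ m) i l := entry_pow_nonneg hQ m i l
    have h2 : 0 ≤ P l j := le_trans (hQ l j) (hQP l j)
    exact mul_le_mul (ih i l) (hQP l j) (hQ l j) (le_trans h1 (ih i l))

lemma specRad_mono (hn : 0 < n) {Q P : Matrix (Fin n) (Fin n) ℝ} (hQ : ∀ i j, 0 ≤ Q i j)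
    (hQP : ∀ i j, Q i j ≤ P i j) : specRad Q ≤ specRad P := by
  obtain ⟨hQ0, hQeq, _⟩ := bridge hn Q
  obtain ⟨hP0, hPeq, _⟩ := bridge hn P
  rw [← ENNReal.ofReal_le_ofReal_iff hP0, hQeq, hPeq]
  refine le_of_tendsto_of_tendsto' (gelfand Q) (gelfand P) fun k => ?_
  refine ENNReal.rpow_le_rpow ?_ (by positivity)
  have : ‖Q ^ k‖₊ ≤ ‖P ^ k‖₊ := by
    refine nnnorm_mono fun i j => ?_
    have h1 := entry_pow_nonneg hQ k i j
    have h2 := entry_pow_mono hQ hQP k i j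
    rw [← NNReal.coe_le_coe]
    simp only [coe_nnnorm, Real.norm_eq_abs]
    rw [abs_of_nonneg h1, abs_of_nonneg (le_trans h1 h2)]
    exact h2
  exact_mod_cast this


lemma inv_nonneg_of_lt (hn : 0 < n) {P : Matrix (Fin n) (Fin n) ℝ} (hP : ∀ i j, 0 ≤ P i j)
    {t : ℝ} (ht : specRad P < t) :
    IsUnit (t • (1 : Matrix (Fin n) (Fin n) ℝ) - P).det ∧
      ∀ i j, 0 ≤ (t • (1 : Matrix (Fin n) (Fin n) ℝ) - P)⁻¹ i j := by
  obtain ⟨hρ0, hρeq, hρub⟩ := bridge hn P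
  have ht0 : 0 < t := lt_of_le_of_lt hρ0 ht
  set A := t • (1 : Matrix (Fin n) (Fin n) ℝ) - P with hA
  have hmapA : A.map Complex.ofReal
      = (t : ℂ) • (1 : Matrix (Fin n) (Fin n) ℂ) - P.map Complex.ofReal := by
    ext i j
    by_cases h : i = j <;>
      simp [hA, Matrix.map_apply, Matrix.sub_apply, Matrix.smul_apply, Matrix.one_apply, h]
  have hres : (t : ℂ) ∈ resolventSet ℂ (P.map Complex.ofReal) := by
    apply spectrum.mem_resolventSet_of_spectralRadius_lt
    rw [← hρeq]
    have hnt : (‖(t : ℂ)‖₊ : ℝ≥0∞) = ENNReal.ofReal t := by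
      rw [← enorm_eq_nnnorm, ← ofReal_norm, Complex.norm_real, Real.norm_eq_abs, abs_of_pos ht0]
    rw [hnt]
    exact (ENNReal.ofReal_lt_ofReal_iff ht0).mpr ht
  have hdetC : IsUnit ((A.map Complex.ofReal).det) := by
    rw [hmapA]
    have : (t : ℂ) • (1 : Matrix (Fin n) (Fin n) ℂ) - P.map Complex.ofReal
        = algebraMap ℂ (Matrix (Fin n) (Fin n) ℂ) (t : ℂ) - P.map Complex.ofReal := by
      rw [Algebra.algebraMap_eq_smul_one]
    rw [this]
    exact (Matrix.isUnit_iff_isUnit_det _).mp hres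
  have hdet : IsUnit A.det := by
    have hmap : (A.map Complex.ofReal).det = ((A.det : ℝ) : ℂ) := by
      have : A.map Complex.ofReal = Complex.ofRealHom.mapMatrix A := rfl
      rw [this, ← RingHom.map_det]; rfl
    rw [hmap] at hdetC
    have : (A.det : ℂ) ≠ 0 := hdetC.ne_zero
    have : A.det ≠ 0 := by exact_mod_cast this
    exact isUnit_iff_ne_zero.mpr this
  refine ⟨hdet, ?_⟩
  obtain ⟨r, hr1, hr2⟩ := exists_between ht
  have hr0 : 0 < r := lt_of_le_of_lt hρ0 hr1
  have hev : ∀ᶠ k : ℕ in atTop, ‖P ^ k‖ ≤ r ^ k := by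
    have hlt : spectralRadius ℂ (P.map Complex.ofReal) < (r.toNNReal : ℝ≥0) := by
      rw [← hρeq, ENNReal.coe_nnreal_eq, Real.coe_toNNReal r hr0.le]
      exact (ENNReal.ofReal_lt_ofReal_iff hr0).mpr hr1
    filter_upwards [eventually_norm_pow_le hlt] with k hk
    have h2 : (‖P ^ k‖₊ : ℝ) ≤ ((r.toNNReal : ℝ≥0) ^ k : ℝ≥0) := by exact_mod_cast hk
    rw [NNReal.coe_pow, Real.coe_toNNReal r hr0.le] at h2
    exact h2
  have hzero : Tendsto (fun k : ℕ => ‖P ^ k‖ * t⁻¹ ^ k) atTop (𝓝 0) := by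
    apply squeeze_zero' (Filter.Eventually.of_forall fun k =>
      mul_nonneg (norm_nonneg _) (by positivity))
    · filter_upwards [hev] with k hk
      calc ‖P ^ k‖ * t⁻¹ ^ k ≤ r ^ k * t⁻¹ ^ k :=
            mul_le_mul_of_nonneg_right hk (by positivity)
        _ = (r / t) ^ k := by rw [div_pow, ← mul_pow]; ring_nf
    · have hrt : |r / t| < 1 := by
        rw [abs_of_pos (div_pos hr0 ht0)]
        rw [div_lt_one ht0]; exact hr2
      simpa using tendsto_pow_atTop_nhds_zero_of_abs_lt_one hrt
  set S : ℕ → Matrix (Fin n) (Fin n) ℝ :=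
    fun k => ∑ l ∈ Finset.range k, (t⁻¹ ^ (l + 1)) • P ^ l with hS
  have key : ∀ k, A * S k = 1 - t⁻¹ ^ k • P ^ k := by
    intro k
    induction k with
    | zero => simp [hS]
    | succ m ih =>
      have hsucc : S (m + 1) = S m + t⁻¹ ^ (m + 1) • P ^ m := by
        rw [hS]; exact Finset.sum_range_succ _ _
      have hAP : A * P ^ m = t • P ^ m - P ^ (m + 1) := by
        rw [hA, sub_mul, Matrix.smul_mul, one_mul, pow_succ']
      rw [hsucc, mul_add, ih, mul_smul_comm, hAP, smul_sub, smul_smul]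
      have h1 : t⁻¹ ^ (m + 1) * t = t⁻¹ ^ m := by
        rw [pow_succ]; field_simp
      rw [h1]
      abel
  have hSinv : ∀ k, S k = A⁻¹ - A⁻¹ * (t⁻¹ ^ k • P ^ k) := by
    intro k
    have h1 : A⁻¹ * (A * S k) = S k := by
      rw [← mul_assoc, Matrix.nonsing_inv_mul _ hdet, one_mul]
    rw [← h1, key k, mul_sub, mul_one]
  intro i j
  have hSnn : ∀ k, 0 ≤ S k i j := by
    intro k
    rw [hS]
    simp only [Finset.sum_apply, Matrix.sum_apply, Matrix.smul_apply, smul_eq_mul]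
    exact Finset.sum_nonneg fun l _ => mul_nonneg (by positivity) (entry_pow_nonneg hP l i j)
  have herr : Tendsto (fun k => (A⁻¹ * (t⁻¹ ^ k • P ^ k)) i j) atTop (𝓝 0) := by
    have hb : ∀ k : ℕ, ‖(A⁻¹ * (t⁻¹ ^ k • P ^ k)) i j‖ ≤ ‖A⁻¹‖ * (‖P ^ k‖ * t⁻¹ ^ k) := by
      intro k
      calc ‖(A⁻¹ * (t⁻¹ ^ k • P ^ k)) i j‖ ≤ ‖A⁻¹ * (t⁻¹ ^ k • P ^ k)‖ := by
            rw [Real.norm_eq_abs]; exact entry_abs_le _ i j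
        _ ≤ ‖A⁻¹‖ * ‖t⁻¹ ^ k • P ^ k‖ := norm_mul_le _ _
        _ = ‖A⁻¹‖ * (‖P ^ k‖ * t⁻¹ ^ k) := by
            rw [norm_smul, Real.norm_eq_abs, abs_of_pos (by positivity : (0:ℝ) < t⁻¹ ^ k)]
            ring
    exact squeeze_zero_norm hb (by simpa using (tendsto_const_nhds (x := ‖A⁻¹‖)).mul hzero)
  have hlim : Tendsto (fun k => S k i j) atTop (𝓝 (A⁻¹ i j)) := by
    have : (fun k => S k i j) = fun k => A⁻¹ i j - (A⁻¹ * (t⁻¹ ^ k • P ^ k)) i j := by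
      funext k; rw [hSinv k]; simp [Matrix.sub_apply]
    rw [this]
    simpa using (tendsto_const_nhds (x := A⁻¹ i j)).sub herr
  exact le_of_tendsto_of_tendsto' tendsto_const_nhds hlim hSnn


lemma specRad_le_of_forall {X : Matrix (Fin n) (Fin n) ℝ} {s : ℝ} (hs : 0 ≤ s)
    (h : ∀ μ ∈ spectrum ℂ (X.map Complex.ofReal), ‖μ‖ ≤ s) : specRad X ≤ s := by
  apply Real.sSup_le _ hs
  rintro r ⟨μ, hμ, rfl⟩; exact h μ hμ

lemma nsmmat_inv_nonneg {A : Matrix (Fin n) (Fin n) ℝ} (hA : IsNsMMat A) :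
    ∀ i j, 0 ≤ A⁻¹ i j := by
  obtain ⟨⟨s, P, hP, hsP, hAeq⟩, hdet⟩ := hA
  rcases Nat.eq_zero_or_pos n with h0 | hn
  · subst h0; exact fun i => i.elim0
  intro i j
  have hdet' : A.det ≠ 0 := hdet.ne_zero
  have hmain : ∀ m : ℕ, 0 ≤ (A + (1 / (m + 1) : ℝ) • 1)⁻¹ i j := by
    intro m
    have hpos : (0 : ℝ) < 1 / (m + 1) := by positivity
    have heq : A + (1 / (m + 1) : ℝ) • (1 : Matrix (Fin n) (Fin n) ℝ)
        = (s + 1 / (m + 1)) • (1 : Matrix (Fin n) (Fin n) ℝ) - P := by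
      rw [hAeq, add_smul]; abel
    rw [heq]
    exact (inv_nonneg_of_lt hn hP (lt_of_le_of_lt hsP (by linarith))).2 i j
  exact le_of_tendsto_of_tendsto' tendsto_const_nhds (tendsto_inv_entry A hdet' i j) hmain

lemma comparison {A B : Matrix (Fin n) (Fin n) ℝ} (hA : IsNsMMat A)
    (hZ : ∀ i j, i ≠ j → B i j ≤ 0) (hAB : ∀ i j, A i j ≤ B i j) : IsNsMMat B := by
  rcases Nat.eq_zero_or_pos n with h0 | hn
  · subst h0
    haveI hss : Subsingleton (Matrix (Fin 0) (Fin 0) ℂ) :=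
      ⟨fun a b => by ext i; exact i.elim0⟩
    refine ⟨⟨0, 0, fun i => i.elim0, ?_, ?_⟩, ?_⟩
    · apply Real.sSup_le _ le_rfl
      rintro r ⟨μ, hμ, rfl⟩
      exact absurd (isUnit_of_subsingleton _) (spectrum.mem_iff.mp hμ)
    · ext i; exact i.elim0
    · rw [Matrix.det_fin_zero]; exact isUnit_one
  obtain ⟨⟨s₀, P₀, hP₀, hs₀, hAeq⟩, hdetA⟩ := hA
  have hAinv := nsmmat_inv_nonneg ⟨⟨s₀, P₀, hP₀, hs₀, hAeq⟩, hdetA⟩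
  obtain ⟨hρ₀0, hρ₀eq, hρ₀ub⟩ := bridge hn P₀
  set c : ℝ := ∑ i, (B i i - A i i) with hc
  have hterm : ∀ i : Fin n, 0 ≤ B i i - A i i := fun i => sub_nonneg.mpr (hAB i i)
  have hc0 : 0 ≤ c := Finset.sum_nonneg fun i _ => hterm i
  have hci : ∀ i, B i i - A i i ≤ c :=
    fun i => Finset.single_le_sum (f := fun i => B i i - A i i)
      (fun i _ => hterm i) (Finset.mem_univ i)
  set s : ℝ := s₀ + c with hs
  have hs₀0 : 0 ≤ s₀ := le_trans hρ₀0 hs₀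
  have hs0 : 0 ≤ s := by positivity
  set Q : Matrix (Fin n) (Fin n) ℝ := s • (1 : Matrix (Fin n) (Fin n) ℝ) - B with hQ
  set P : Matrix (Fin n) (Fin n) ℝ := s • (1 : Matrix (Fin n) (Fin n) ℝ) - A with hPdef
  have hBQ : B = s • (1 : Matrix (Fin n) (Fin n) ℝ) - Q := by rw [hQ, sub_sub_cancel]
  have hAP : A = s • (1 : Matrix (Fin n) (Fin n) ℝ) - P := by rw [hPdef, sub_sub_cancel]
  have hQ0 : ∀ i j, 0 ≤ Q i j := by
    intro i j
    by_cases h : i = j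
    · subst h
      have h1 : A i i = s₀ - P₀ i i := by
        rw [hAeq]; simp [Matrix.sub_apply, Matrix.smul_apply, Matrix.one_apply]
      have h2 := hci i
      have h3 := hP₀ i i
      simp only [hQ, Matrix.sub_apply, Matrix.smul_apply, Matrix.one_apply_eq, smul_eq_mul,
        mul_one]
      rw [hs] at *
      linarith
    · simp only [hQ, Matrix.sub_apply, Matrix.smul_apply, Matrix.one_apply_ne h, smul_eq_mul,
        mul_zero, zero_sub, neg_nonneg]
      exact hZ i j h
  have hQP : ∀ i j, Q i j ≤ P i j := by
    intro i j
    simp only [hQ, hPdef, Matrix.sub_apply]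
    exact sub_le_sub_left (hAB i j) _
  have hP0 : ∀ i j, 0 ≤ P i j := fun i j => le_trans (hQ0 i j) (hQP i j)
  -- spectral radius of P
  have hPeq : P = c • (1 : Matrix (Fin n) (Fin n) ℝ) + P₀ := by
    rw [hPdef, hAeq, hs, add_smul]; abel
  have hmapP : P.map Complex.ofReal
      = algebraMap ℂ (Matrix (Fin n) (Fin n) ℂ) (c : ℂ) + P₀.map Complex.ofReal := by
    rw [Algebra.algebraMap_eq_smul_one]
    ext i j
    by_cases h : i = j <;>
      simp [hPeq, Matrix.map_apply, Matrix.add_apply, Matrix.smul_apply, Matrix.one_apply, h]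
  have hρP : specRad P ≤ s := by
    apply specRad_le_of_forall hs0
    intro μ hμ
    rw [hmapP, ← spectrum.singleton_add_eq] at hμ
    obtain ⟨x, hx, ν, hν, rfl⟩ := Set.mem_add.mp hμ
    rw [Set.mem_singleton_iff] at hx
    subst hx
    calc ‖(c : ℂ) + ν‖ ≤ ‖(c : ℂ)‖ + ‖ν‖ := norm_add_le _ _
      _ ≤ c + specRad P₀ := by
          have : ‖(c : ℂ)‖ = |c| := Complex.norm_real c
          rw [this, abs_of_nonneg hc0]
          exact add_le_add_right (hρ₀ub ν hν) c
      _ ≤ c + s₀ := by linarith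
      _ = s := by rw [hs]; ring
  have hρQ : specRad Q ≤ s := le_trans (specRad_mono hn hQ0 hQP) hρP
  -- invertibility of B
  have hdetB : B.det ≠ 0 := by
    intro hd
    have hdC : (B.map Complex.ofReal).det = 0 := by
      have : B.map Complex.ofReal = Complex.ofRealHom.mapMatrix B := rfl
      rw [this, ← RingHom.map_det]
      exact_mod_cast congrArg (Complex.ofRealHom) hd
    obtain ⟨v, hv0, hv⟩ := (Matrix.exists_mulVec_eq_zero_iff).mpr hdC
    set u : Fin n → ℝ := fun i => ‖v i‖ with hu
    have hu0 : ∀ i, 0 ≤ u i := fun i => norm_nonneg _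
    have hQv : ∀ i, s * u i ≤ (Q *ᵥ u) i := by
      intro i
      have hmapQ : (Q.map Complex.ofReal) *ᵥ v = (s : ℂ) • v := by
        have hQc : Q.map Complex.ofReal
            = (s : ℂ) • (1 : Matrix (Fin n) (Fin n) ℂ) - B.map Complex.ofReal := by
          ext i' j'
          by_cases h : i' = j' <;>
            simp [hQ, Matrix.map_apply, Matrix.sub_apply, Matrix.smul_apply, Matrix.one_apply, h]
        rw [hQc, Matrix.sub_mulVec, hv, sub_zero, Matrix.smul_mulVec, Matrix.one_mulVec]
      have h1 : s * u i = ‖((s : ℂ) • v) i‖ := by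
        simp [hu, Pi.smul_apply, norm_smul, Complex.norm_real, abs_of_nonneg hs0]
      rw [h1, ← hmapQ]
      calc ‖((Q.map Complex.ofReal) *ᵥ v) i‖ = ‖∑ j, (Q i j : ℂ) * v j‖ := by
            simp [Matrix.mulVec, dotProduct, Matrix.map_apply]
        _ ≤ ∑ j, ‖(Q i j : ℂ) * v j‖ := norm_sum_le _ _
        _ = ∑ j, Q i j * u j := by
            apply Finset.sum_congr rfl
            intro j _
            rw [norm_mul, Complex.norm_real, Real.norm_eq_abs, abs_of_nonneg (hQ0 i j), hu]
        _ = (Q *ᵥ u) i := by simp [Matrix.mulVec, dotProduct]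
    have hAu : ∀ i, (A *ᵥ u) i ≤ 0 := by
      intro i
      have h1 : (A *ᵥ u) i = s * u i - (P *ᵥ u) i := by
        rw [hAP, Matrix.sub_mulVec, Matrix.smul_mulVec, Matrix.one_mulVec]
        simp
      have h2 : (Q *ᵥ u) i ≤ (P *ᵥ u) i := by
        simp only [Matrix.mulVec, dotProduct]
        exact Finset.sum_le_sum fun j _ => mul_le_mul_of_nonneg_right (hQP i j) (hu0 j)
      rw [h1]
      linarith [hQv i]
    have hueq : u = A⁻¹ *ᵥ (A *ᵥ u) := by
      rw [Matrix.mulVec_mulVec, Matrix.nonsing_inv_mul _ hdetA, Matrix.one_mulVec]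
    have hule : ∀ i, u i ≤ 0 := by
      intro i
      rw [hueq]
      simp only [Matrix.mulVec, dotProduct]
      apply Finset.sum_nonpos
      intro j _
      exact mul_nonpos_of_nonneg_of_nonpos (hAinv i j) (hAu j)
    obtain ⟨i, hi⟩ := Function.ne_iff.mp hv0
    have : u i = 0 := le_antisymm (hule i) (hu0 i)
    rw [hu] at this
    simp only [Pi.zero_apply] at hi
    exact hi (norm_eq_zero.mp this)
  exact ⟨⟨s, Q, hQ0, hρQ, hBQ⟩, isUnit_iff_ne_zero.mpr hdetB⟩

end QVEAux

namespace QVEMain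

variable {n : ℕ}

lemma mulVec_nonneg {M : Matrix (Fin n) (Fin n) ℝ} (hM : ∀ i j, 0 ≤ M i j)
    {v : Fin n → ℝ} (hv : 0 ≤ v) : 0 ≤ M *ᵥ v := by
  intro i
  simp only [Matrix.mulVec, dotProduct, Pi.zero_apply]
  exact Finset.sum_nonneg fun j _ => mul_nonneg (hM i j) (hv j)

lemma mulVec_mono {M : Matrix (Fin n) (Fin n) ℝ} (hM : ∀ i j, 0 ≤ M i j)
    {u v : Fin n → ℝ} (huv : u ≤ v) : M *ᵥ u ≤ M *ᵥ v := by
  intro i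
  simp only [Matrix.mulVec, dotProduct]
  exact Finset.sum_le_sum fun j _ => mul_le_mul_of_nonneg_left (huv j) (hM i j)

lemma inv_mulVec_le {B : Matrix (Fin n) (Fin n) ℝ} (hdet : IsUnit B.det)
    (hinv : ∀ i j, 0 ≤ B⁻¹ i j) {u w : Fin n → ℝ} (h : B *ᵥ u ≤ w) : u ≤ B⁻¹ *ᵥ w := by
  have h1 : u = B⁻¹ *ᵥ (B *ᵥ u) := by
    rw [Matrix.mulVec_mulVec, Matrix.nonsing_inv_mul _ hdet, Matrix.one_mulVec]
  calc u = B⁻¹ *ᵥ (B *ᵥ u) := h1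
    _ ≤ B⁻¹ *ᵥ w := mulVec_mono hinv h

lemma le_inv_mulVec {B : Matrix (Fin n) (Fin n) ℝ} (hdet : IsUnit B.det)
    (hinv : ∀ i j, 0 ≤ B⁻¹ i j) {u w : Fin n → ℝ} (h : w ≤ B *ᵥ u) : B⁻¹ *ᵥ w ≤ u := by
  have h1 : u = B⁻¹ *ᵥ (B *ᵥ u) := by
    rw [Matrix.mulVec_mulVec, Matrix.nonsing_inv_mul _ hdet, Matrix.one_mulVec]
  calc B⁻¹ *ᵥ w ≤ B⁻¹ *ᵥ (B *ᵥ u) := mulVec_mono hinv h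
    _ = u := h1.symm

lemma toMatrix'_entry_nonneg {f : (Fin n → ℝ) →ₗ[ℝ] (Fin n → ℝ)}
    (hf : ∀ v : Fin n → ℝ, 0 ≤ v → 0 ≤ f v) : ∀ i j, 0 ≤ LinearMap.toMatrix' f i j := by
  intro i j
  rw [LinearMap.toMatrix'_apply]
  refine hf _ ?_ i
  intro l
  dsimp
  by_cases h : l = j <;> simp [Pi.single_apply, h]

lemma toMatrix'_mulVec (f : (Fin n → ℝ) →ₗ[ℝ] (Fin n → ℝ)) (v : Fin n → ℝ) :
    LinearMap.toMatrix' f *ᵥ v = f v := by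
  conv_rhs => rw [← Matrix.toLin'_toMatrix' f]
  rw [Matrix.toLin'_apply]

lemma single_vanish {b₁ : (Fin n → ℝ) →ₗ[ℝ] (Fin n → ℝ) →ₗ[ℝ] (Fin n → ℝ)}
    (hb₁ : ∀ u v : Fin n → ℝ, 0 ≤ u → 0 ≤ v → 0 ≤ b₁ u v) {xs w : Fin n → ℝ}
    (hxs : ∀ i, 0 < xs i) (hw : 0 ≤ w) (h : b₁ xs w = 0) :
    ∀ j i, b₁ (fun l => if l = j then (1:ℝ) else 0) w i = 0 := by
  have hsingle_nn : ∀ j : Fin n, (0:Fin n → ℝ) ≤ fun l => if l = j then (1:ℝ) else 0 := by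
    intro j l; dsimp; split <;> norm_num
  intro j i
  have hxs_eq : xs = ∑ l, xs l • (fun m => if m = l then (1:ℝ) else 0) := by
    funext m
    rw [Finset.sum_apply]
    simp only [Pi.smul_apply, smul_eq_mul]
    rw [Finset.sum_eq_single m]
    · simp
    · intro l _ hl; simp [Ne.symm hl]
    · intro hm; exact absurd (Finset.mem_univ m) hm
  have hdecomp : (b₁ xs w) i = ∑ l, xs l * b₁ (fun m => if m = l then (1:ℝ) else 0) w i := by
    have hflip : b₁ xs w = b₁.flip w xs := rfl
    rw [hflip]
    conv_lhs => rw [hxs_eq]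
    rw [map_sum, Finset.sum_apply]
    refine Finset.sum_congr rfl fun l _ => ?_
    rw [_root_.map_smul]
    simp [LinearMap.flip_apply]
  have h0 : ∑ l, xs l * b₁ (fun m => if m = l then (1:ℝ) else 0) w i = 0 := by
    rw [← hdecomp, h]; rfl
  have hterm := (Finset.sum_eq_zero_iff_of_nonneg (fun l _ =>
    mul_nonneg (hxs l).le (hb₁ _ w (hsingle_nn l) hw i))).mp h0 j (Finset.mem_univ j)
  have := (hxs j).ne'
  rcases mul_eq_zero.mp hterm with h' | h'
  · exact absurd h' this
  · exact h'

end QVEMain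


open QVEMain

/-- Gauss–Seidel-type update for the functional iteration of the QVE: if
`0 ≤ x ≤ x*`, `F(x) ≤ 0` and `x' = J(x)⁻¹ g(x)`, then for any `y` with `x ≤ y ≤ x'`
and any `g''` with `g(x) ≤ g'' ≤ g(x')`, the update `x^GS = J(y)⁻¹ g''` satisfies
`x' ≤ x^GS ≤ x*`. -/
theorem qve_gauss_seidel_update {n : ℕ}
    (M : Matrix (Fin n) (Fin n) ℝ) (hM : IsNsMMat M)
    (a : Fin n → ℝ) (ha : 0 ≤ a)
    (b b₁ b₂ : (Fin n → ℝ) →ₗ[ℝ] (Fin n → ℝ) →ₗ[ℝ] (Fin n → ℝ))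
    (hb : ∀ x y : Fin n → ℝ, 0 ≤ x → 0 ≤ y → 0 ≤ b x y)
    (hb₁ : ∀ x y : Fin n → ℝ, 0 ≤ x → 0 ≤ y → 0 ≤ b₁ x y)
    (hb₂ : ∀ x y : Fin n → ℝ, 0 ≤ x → 0 ≤ y → 0 ≤ b₂ x y)
    (hbsplit : b = b₁ + b₂)
    (N P : Matrix (Fin n) (Fin n) ℝ) (hN : IsMMat N) (hP : ∀ i j, 0 ≤ P i j)
    (hMsplit : M = N - P)
    (xs : Fin n → ℝ) (hxs_nonneg : 0 ≤ xs) (hxs_sol : M *ᵥ xs = a + b xs xs)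
    (hxs_min : ∀ s : Fin n → ℝ, 0 ≤ s → M *ᵥ s = a + b s s → xs ≤ s)
    (hxs_pos : ∀ i, 0 < xs i)
    (hnondeg : ∀ x : Fin n → ℝ, 0 ≤ x → x ≤ xs → x ≠ xs →
      IsNsMMat (M - LinearMap.toMatrix' (b x) - LinearMap.toMatrix' (b.flip x)))
    (J : (Fin n → ℝ) → Matrix (Fin n) (Fin n) ℝ)
    (hJ : ∀ x, J x = N - LinearMap.toMatrix' (b₁.flip x))
    (g : (Fin n → ℝ) → Fin n → ℝ)
    (hg : ∀ x, g x = a + P *ᵥ x + b₂ x x)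
    (x x' : Fin n → ℝ) (hx_nonneg : 0 ≤ x) (hx_le : x ≤ xs)
    (hx_F : M *ᵥ x ≤ a + b x x)
    (hx' : x' = (J x)⁻¹ *ᵥ g x)
    (y : Fin n → ℝ) (hy₁ : x ≤ y) (hy₂ : y ≤ x')
    (g'' : Fin n → ℝ) (hg''₁ : g x ≤ g'') (hg''₂ : g'' ≤ g x') :
    x' ≤ (J y)⁻¹ *ᵥ g'' ∧ (J y)⁻¹ *ᵥ g'' ≤ xs := by
  rcases Nat.eq_zero_or_pos n with h0 | hn
  · subst h0
    constructor <;> intro i <;> exact i.elim0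
  -- basic equations
  have happ : ∀ u v : Fin n → ℝ, b u v = b₁ u v + b₂ u v := by
    intro u v; rw [hbsplit]; rfl
  have hJrow : ∀ z w : Fin n → ℝ, J z *ᵥ w = N *ᵥ w - b₁ w z := by
    intro z w
    rw [hJ z, Matrix.sub_mulVec, toMatrix'_mulVec]
    rfl
  have hN' : N = M + P := by rw [hMsplit]; abel
  have hNvec : ∀ w : Fin n → ℝ, N *ᵥ w = M *ᵥ w + P *ᵥ w := by
    intro w; rw [hN', Matrix.add_mulVec]
  have hgmono : ∀ u v : Fin n → ℝ, 0 ≤ u → u ≤ v → g u ≤ g v := by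
    intro u v hu huv
    rw [← sub_nonneg]
    have hvu : 0 ≤ v - u := sub_nonneg.mpr huv
    have hv : 0 ≤ v := le_trans hu huv
    have heq : g v - g u = P *ᵥ (v - u) + (b₂ (v - u) v + b₂ u (v - u)) := by
      rw [hg u, hg v, Matrix.mulVec_sub]
      simp only [map_sub, LinearMap.sub_apply]
      abel
    rw [heq]
    have h1 := mulVec_nonneg hP hvu
    have h2 := hb₂ _ _ hvu hv
    have h3 := hb₂ _ _ hu hvu
    intro i
    have := h1 i; have := h2 i; have := h3 i
    simp only [Pi.add_apply, Pi.zero_apply] at *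
    linarith
  have hcomp1 : J x *ᵥ x ≤ g x := by
    rw [← sub_nonneg]
    have heq : g x - J x *ᵥ x = (a + b x x) - M *ᵥ x := by
      rw [hJrow, hNvec, hg, happ]
      abel
    rw [heq, sub_nonneg]
    exact hx_F
  have hcomp2 : ∀ z : Fin n → ℝ, J z *ᵥ xs = g xs + b₁ xs (xs - z) := by
    intro z
    rw [hJrow, hNvec, hxs_sol, hg, happ, map_sub]
    abel
  -- M-matrix structure of J z
  obtain ⟨sN, PN, hPN, hsN, hNeq⟩ := hN
  have hNoff : ∀ i j, i ≠ j → N i j ≤ 0 := by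
    intro i j hij
    rw [hNeq]
    simp only [Matrix.sub_apply, Matrix.smul_apply, Matrix.one_apply_ne hij, smul_eq_mul,
      mul_zero, zero_sub, neg_nonpos]
    exact hPN i j
  have hJoff : ∀ z : Fin n → ℝ, 0 ≤ z → ∀ i j, i ≠ j → J z i j ≤ 0 := by
    intro z hz i j hij
    rw [hJ]
    simp only [Matrix.sub_apply]
    have h1 : 0 ≤ LinearMap.toMatrix' (b₁.flip z) i j :=
      toMatrix'_entry_nonneg (fun v hv => hb₁ v z hv hz) i j
    have h2 := hNoff i j hij
    linarith
  have hFle : ∀ z : Fin n → ℝ, 0 ≤ z → ∀ i j,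
      (M - LinearMap.toMatrix' (b z) - LinearMap.toMatrix' (b.flip z)) i j ≤ J z i j := by
    intro z hz i j
    rw [hJ, hMsplit]
    simp only [Matrix.sub_apply]
    have h1 : 0 ≤ P i j := hP i j
    have h2 : 0 ≤ LinearMap.toMatrix' (b z) i j :=
      toMatrix'_entry_nonneg (fun v hv => hb z v hz hv) i j
    have h3 : LinearMap.toMatrix' (b₁.flip z) i j ≤ LinearMap.toMatrix' (b.flip z) i j := by
      have hz2 : 0 ≤ LinearMap.toMatrix' (b₂.flip z) i j :=
        toMatrix'_entry_nonneg (fun v hv => hb₂ v z hv hz) i j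
      have hsum : LinearMap.toMatrix' (b.flip z)
          = LinearMap.toMatrix' (b₁.flip z) + LinearMap.toMatrix' (b₂.flip z) := by
        rw [hbsplit]
        rw [← map_add]
        rfl
      rw [hsum]
      simp only [Matrix.add_apply]
      linarith
    linarith
  have hJgood : ∀ z : Fin n → ℝ, 0 ≤ z → z ≤ xs → z ≠ xs →
      IsUnit (J z).det ∧ ∀ i j, 0 ≤ (J z)⁻¹ i j := by
    intro z hz hzle hzne
    have hns := QVEAux.comparison (hnondeg z hz hzle hzne) (hJoff z hz) (hFle z hz)
    exact ⟨hns.2, QVEAux.nsmmat_inv_nonneg hns⟩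
  by_cases hxxs : x = xs
  · -- x = xs
    have hJxx : J x *ᵥ xs = g x := by
      rw [hcomp2 x, hxxs, sub_self, map_zero, add_zero]
    by_cases hdet : IsUnit (J x).det
    · have hx'eq : x' = xs := by
        rw [hx', ← hJxx, Matrix.mulVec_mulVec, Matrix.nonsing_inv_mul _ hdet,
          Matrix.one_mulVec]
      have hyeq : y = x := by
        apply le_antisymm
        · rw [hxxs]; exact hx'eq ▸ hy₂
        · exact hy₁
      have hgx' : g x' = g x := by rw [hx'eq, ← hxxs]
      have hg''eq : g'' = g x := by
        apply le_antisymm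
        · rw [← hgx']; exact hg''₂
        · exact hg''₁
      rw [hyeq, hg''eq, ← hx']
      exact ⟨le_rfl, hx'eq ▸ le_rfl⟩
    · exfalso
      have hinv0 : (J x)⁻¹ = 0 := Matrix.nonsing_inv_apply_not_isUnit _ hdet
      have hx'0 : x' = 0 := by rw [hx', hinv0, Matrix.zero_mulVec]
      have h1 : xs ⟨0, hn⟩ ≤ 0 := by
        have h2 := le_trans (hy₁ ⟨0, hn⟩) (hy₂ ⟨0, hn⟩)
        rw [hx'0, hxxs] at h2
        exact h2
      exact absurd h1 (not_le.mpr (hxs_pos ⟨0, hn⟩))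
  · -- x ≠ xs
    obtain ⟨hJxdet, hJxinv⟩ := hJgood x hx_nonneg hx_le hxxs
    have hx'ge : x ≤ x' := by
      rw [hx']; exact inv_mulVec_le hJxdet hJxinv hcomp1
    have hx'nn : 0 ≤ x' := le_trans hx_nonneg hx'ge
    have hgxle : g x ≤ g xs := hgmono x xs hx_nonneg hx_le
    have hbxs : 0 ≤ b₁ xs (xs - x) := hb₁ _ _ hxs_nonneg (sub_nonneg.mpr hx_le)
    have hx'le : x' ≤ xs := by
      rw [hx']
      apply le_inv_mulVec hJxdet hJxinv
      rw [hcomp2 x]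
      calc g x ≤ g xs := hgxle
        _ ≤ g xs + b₁ xs (xs - x) := le_add_of_nonneg_right hbxs
    have hyxs : y ≤ xs := le_trans hy₂ hx'le
    have hynn : 0 ≤ y := le_trans hx_nonneg hy₁
    have hJxmulx' : J x *ᵥ x' = g x := by
      rw [hx', Matrix.mulVec_mulVec, Matrix.mul_nonsing_inv _ hJxdet, Matrix.one_mulVec]
    by_cases hyxs' : y = xs
    · -- degenerate subcase : y = xs forces x' = xs and J y = J x
      have hx'xs : x' = xs := le_antisymm hx'le (hyxs' ▸ hy₂)
      have h1 : g x = g xs + b₁ xs (xs - x) := by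
        rw [← hJxmulx', hx'xs, hcomp2 x]
      have h2 : b₁ xs (xs - x) = 0 := by
        funext i
        have ha' := congrFun h1 i
        have hbnn := hbxs i
        have hle := hgxle i
        simp only [Pi.add_apply] at ha'
        simp only [Pi.zero_apply] at hbnn ⊢
        linarith
      have hgxxs : g x = g xs := by rw [h1, h2, add_zero]
      have hJeq : J y = J x := by
        rw [hyxs', hJ, hJ]
        congr 1
        ext i j
        rw [LinearMap.toMatrix'_apply, LinearMap.toMatrix'_apply]
        have hz := single_vanish hb₁ hxs_pos (sub_nonneg.mpr hx_le) h2 j i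
        have h3 : b₁ (fun l => if l = j then (1:ℝ) else 0) xs i
            - b₁ (fun l => if l = j then (1:ℝ) else 0) x i = 0 := by
          have hms := congrFun (map_sub (b₁ (fun l => if l = j then (1:ℝ) else 0)) xs x) i
          simp only [Pi.sub_apply] at hms
          have hz0 : (0:ℝ) = 0 := rfl
          linarith [hms, hz]
        simp only [LinearMap.flip_apply]
        have hsj : (Pi.single j (1:ℝ) : Fin n → ℝ) = fun l => if l = j then (1:ℝ) else 0 := by
          funext l; simp [Pi.single_apply]
        rw [hsj]
        linarith [h3]
      have hg''eq : g'' = g x := by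
        apply le_antisymm
        · rw [hx'xs] at hg''₂
          rw [hgxxs]
          exact hg''₂
        · exact hg''₁
      rw [hJeq, hg''eq, ← hx']
      exact ⟨le_rfl, hx'le⟩
    · -- main subcase
      obtain ⟨hJydet, hJyinv⟩ := hJgood y hynn hyxs hyxs'
      constructor
      · apply inv_mulVec_le hJydet hJyinv
        have heq : J y *ᵥ x' = g x - b₁ x' (y - x) := by
          have hx'row : N *ᵥ x' - b₁ x' x = g x := by rw [← hJrow]; exact hJxmulx'
          rw [hJrow, ← hx'row, map_sub]
          abel
        rw [heq]
        have hb' : 0 ≤ b₁ x' (y - x) := hb₁ _ _ hx'nn (sub_nonneg.mpr hy₁)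
        calc g x - b₁ x' (y - x) ≤ g x := by
              intro i
              have := hb' i
              simp only [Pi.sub_apply, Pi.zero_apply] at *
              linarith
          _ ≤ g'' := hg''₁
      · apply le_inv_mulVec hJydet hJyinv
        rw [hcomp2 y]
        have h3 : g'' ≤ g xs := le_trans hg''₂ (hgmono x' xs hx'nn hx'le)
        have h4 : 0 ≤ b₁ xs (xs - y) := hb₁ _ _ hxs_nonneg (sub_nonneg.mpr hyxs)
        calc g'' ≤ g xs := h3
          _ ≤ g xs + b₁ xs (xs - y) := le_add_of_nonneg_right h4
end

section
/- Let x* be a nonnegative solution of the QVE Mx = a + b(x,x), set R_x := M − b(·,x) (the matrix of w ↦ Mw − b(w,x)), and suppose R_y is a nonsingular M-matrix for every y with 0 ≤ y ≤ x*. Define G'_y := I − R_y⁻¹ b(R_y⁻¹ a, ·), where b(v, ·) denotes the matrix of w ↦ b(v, w). Then G'_{x*} = R_{x*}⁻¹ F'_{x*}, and G'_x ≥ G'_{x*} entrywise for every x with 0 ≤ x ≤ x*. -/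
open Matrix Filter Topology

open scoped ENNReal NNReal

section Core
attribute [local instance] Matrix.linftyOpNormedAddCommGroup Matrix.linftyOpNormedRing
  Matrix.linftyOpNormedAlgebra

variable {n : ℕ}

private lemma entry_cont (i j : Fin n) :
    Continuous fun A : Matrix (Fin n) (Fin n) ℝ => A i j := by
  have h : ∀ A : Matrix (Fin n) (Fin n) ℝ, ‖A i j‖ ≤ 1 * ‖A‖ := by
    intro A
    rw [one_mul]
    exact_mod_cast (by
      rw [Matrix.linfty_opNNNorm_def]
      exact le_trans (Finset.single_le_sum (f := fun k => ‖A i k‖₊) (fun k _ => zero_le)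
        (Finset.mem_univ j)) (Finset.le_sup (f := fun i => ∑ j, ‖A i j‖₊) (Finset.mem_univ i)) :
      ‖A i j‖₊ ≤ ‖A‖₊)
  exact AddMonoidHomClass.continuous_of_bound
    (AddMonoidHom.mk' (fun A : Matrix (Fin n) (Fin n) ℝ => A i j) (fun _ _ => rfl)) 1 h

private lemma nnnorm_map_ofReal (A : Matrix (Fin n) (Fin n) ℝ) :
    ‖A.map Complex.ofReal‖₊ = ‖A‖₊ := by
  simp [Matrix.linfty_opNNNorm_def, Matrix.map_apply]

private lemma mul_entry_nonneg {C D : Matrix (Fin n) (Fin n) ℝ}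
    (hC : ∀ i j, 0 ≤ C i j) (hD : ∀ i j, 0 ≤ D i j) : ∀ i j, 0 ≤ (C * D) i j := by
  intro i j
  rw [Matrix.mul_apply]
  exact Finset.sum_nonneg fun k _ => mul_nonneg (hC i k) (hD k j)

private lemma pow_entry_nonneg {t : Matrix (Fin n) (Fin n) ℝ}
    (ht : ∀ i j, 0 ≤ t i j) : ∀ m : ℕ, ∀ i j, 0 ≤ (t ^ m) i j := by
  intro m
  induction m with
  | zero => intro i j; simp [Matrix.one_apply]; positivity
  | succ k ih => rw [pow_succ]; exact mul_entry_nonneg ih ht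

/-- For `r > s ≥ specRad P`, `P ≥ 0`, the matrix `r•1 - P` has a nonnegative inverse. -/
lemma resolvent_nonneg [Nonempty (Fin n)] (P : Matrix (Fin n) (Fin n) ℝ)
    (hP : ∀ i j, 0 ≤ P i j) {s r : ℝ} (hs : specRad P ≤ s) (hr : s < r) :
    (∀ i j, 0 ≤ (r • (1 : Matrix (Fin n) (Fin n) ℝ) - P)⁻¹ i j) := by
  have hPc := (P.map Complex.ofReal)
  set Pc := P.map Complex.ofReal with hPcdef
  -- every spectral value has norm ≤ s
  have hbdd : BddAbove {x : ℝ | ∃ μ ∈ spectrum ℂ Pc, ‖μ‖ = x} := by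
    refine ⟨‖Pc‖, ?_⟩
    rintro x ⟨μ, hμ, rfl⟩
    exact spectrum.norm_le_norm_of_mem hμ
  have hub : ∀ μ ∈ spectrum ℂ Pc, ‖μ‖ ≤ s := by
    intro μ hμ
    exact le_trans (le_csSup hbdd ⟨μ, hμ, rfl⟩) hs
  -- spectrum nonempty : 0 ≤ s, 0 < r
  obtain ⟨μ₀, hμ₀⟩ := spectrum.nonempty Pc
  have hs0 : 0 ≤ s := le_trans (norm_nonneg μ₀) (hub μ₀ hμ₀)
  have hr0 : 0 < r := lt_of_le_of_lt hs0 hr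
  have hne : (r : ℂ) ≠ 0 := by exact_mod_cast hr0.ne'
  set t : Matrix (Fin n) (Fin n) ℝ := r⁻¹ • P with htdef
  have ht : ∀ i j, 0 ≤ t i j := fun i j =>
    mul_nonneg (inv_nonneg.mpr hr0.le) (hP i j)
  have htc : t.map Complex.ofReal = (r : ℂ)⁻¹ • Pc := by
    ext i j
    simp only [htdef, hPcdef, Matrix.map_apply, Matrix.smul_apply, smul_eq_mul,
      Complex.ofReal_mul, Complex.ofReal_inv]
  -- spectral radius of the complexification of t is < 1
  have hrad : spectralRadius ℂ (t.map Complex.ofReal) < 1 := by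
    rw [htc]
    have hle : spectralRadius ℂ ((r : ℂ)⁻¹ • Pc) ≤ ENNReal.ofReal (s / r) := by
      refine iSup₂_le fun μ hμ => ?_
      rw [← ENNReal.ofReal_coe_nnreal, coe_nnnorm]
      apply ENNReal.ofReal_le_ofReal
      set u : ℂˣ := (Units.mk0 (r : ℂ) hne)⁻¹ with hu
      have hueq : (r : ℂ)⁻¹ • Pc = u • Pc := by
        rw [hu, Units.smul_def, Units.val_inv_eq_inv_val, Units.val_mk0]
      rw [hueq, spectrum.unit_smul_eq_smul] at hμ
      obtain ⟨ν, hν, rfl⟩ := hμ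
      have hnorm : ‖u • ν‖ = ‖ν‖ / r := by
        rw [hu, Units.smul_def, Units.val_inv_eq_inv_val, Units.val_mk0, norm_smul,
          norm_inv, Complex.norm_real, Real.norm_eq_abs, abs_of_pos hr0, div_eq_inv_mul]
      rw [show ‖(fun x => (u:ℂ) • x) ν‖ = ‖u • ν‖ from rfl, hnorm]
      gcongr
      exact hub ν hν
    refine lt_of_le_of_lt hle ?_
    rw [ENNReal.ofReal_lt_one]
    exact div_lt_one hr0 |>.mpr hr
  -- Gelfand's formula: find m ≥ 1 with ‖t ^ m‖ < 1
  have hG := spectrum.pow_nnnorm_pow_one_div_tendsto_nhds_spectralRadius (t.map Complex.ofReal)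
  have hev : ∀ᶠ m : ℕ in atTop,
      ((‖(t.map Complex.ofReal) ^ m‖₊ : ℝ≥0∞) ^ (1 / (m : ℝ)) < 1) :=
    hG.eventually_lt_const hrad
  obtain ⟨m, hm1, hmlt⟩ := ((eventually_ge_atTop 1).and hev).exists
  have hmap_pow : (t.map Complex.ofReal) ^ m = (t ^ m).map Complex.ofReal := by
    have : (t.map Complex.ofReal) = (Complex.ofRealHom.mapMatrix t) := rfl
    rw [this, ← map_pow]
    rfl
  have htm : ‖t ^ m‖ < 1 := by
    have h1 : (‖(t.map Complex.ofReal) ^ m‖₊ : ℝ≥0∞) < 1 := by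
      by_contra hcon
      push_neg at hcon
      have : (1 : ℝ≥0∞) ≤ (‖(t.map Complex.ofReal) ^ m‖₊ : ℝ≥0∞) ^ (1 / (m : ℝ)) := by
        calc (1 : ℝ≥0∞) = 1 ^ (1 / (m : ℝ)) := (ENNReal.one_rpow _).symm
        _ ≤ _ := ENNReal.rpow_le_rpow hcon (by positivity)
      exact absurd hmlt (not_lt.mpr this)
    rw [hmap_pow, nnnorm_map_ofReal] at h1
    exact_mod_cast h1
  -- Neumann series for (1 - t^m)⁻¹
  set B := t ^ m with hBdef
  have hB : ∀ i j, 0 ≤ B i j := pow_entry_nonneg ht m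
  have hBsum : HasSum (fun i => B ^ i) (Ring.inverse (1 - B)) :=
    hasSum_geom_series_inverse B htm
  have hBunit : IsUnit (1 - B) := isUnit_one_sub_of_norm_lt_one htm
  have hBdet : IsUnit (1 - B).det := (Matrix.isUnit_iff_isUnit_det _).mp hBunit
  have hBinv : ∀ i j, 0 ≤ (1 - B)⁻¹ i j := by
    intro i j
    rw [Matrix.nonsing_inv_eq_ringInverse]
    have hent : HasSum (fun k => (B ^ k) i j) ((Ring.inverse (1 - B)) i j) :=
      hBsum.map (AddMonoidHom.mk' (fun A : Matrix (Fin n) (Fin n) ℝ => A i j)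
        (fun _ _ => rfl)) (entry_cont i j)
    refine hent.nonneg fun k => pow_entry_nonneg hB k i j
  -- (1 - t)⁻¹ = (∑_{i<m} t^i) * (1 - B)⁻¹ ≥ 0
  have hgeom : (1 - t) * (∑ i ∈ Finset.range m, t ^ i) = 1 - B := by
    have h := mul_geom_sum t m
    have h2 : (1 - t) * (∑ i ∈ Finset.range m, t ^ i)
        = -((t - 1) * ∑ i ∈ Finset.range m, t ^ i) := by
      rw [← neg_mul, neg_sub]
    rw [h2, h, hBdef, neg_sub]
  have hright : (1 - t) * ((∑ i ∈ Finset.range m, t ^ i) * (1 - B)⁻¹) = 1 := by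
    rw [← Matrix.mul_assoc, hgeom, Matrix.mul_nonsing_inv _ hBdet]
  have htinv : (1 - t)⁻¹ = (∑ i ∈ Finset.range m, t ^ i) * (1 - B)⁻¹ :=
    Matrix.inv_eq_right_inv hright
  have hsum_nonneg : ∀ i j, 0 ≤ (∑ i ∈ Finset.range m, t ^ i) i j := by
    intro i j
    rw [Matrix.sum_apply]
    exact Finset.sum_nonneg fun k _ => pow_entry_nonneg ht k i j
  have htinv_nonneg : ∀ i j, 0 ≤ (1 - t)⁻¹ i j := by
    rw [htinv]; exact mul_entry_nonneg hsum_nonneg hBinv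
  -- relate to r•1 - P
  have hD : r • (1 : Matrix (Fin n) (Fin n) ℝ) - P = r • (1 - t) := by
    rw [smul_sub, htdef, smul_smul, mul_inv_cancel₀ hr0.ne', one_smul]
  have hDinv : (r • (1 : Matrix (Fin n) (Fin n) ℝ) - P)⁻¹ = r⁻¹ • (1 - t)⁻¹ := by
    rw [hD]
    refine Matrix.inv_eq_right_inv ?_
    rw [Matrix.smul_mul, Matrix.mul_smul, smul_smul,
      Matrix.mul_nonsing_inv _ (Matrix.isUnit_det_of_right_inverse hright),
      mul_inv_cancel₀ hr0.ne', one_smul]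
  intro i j
  rw [hDinv, Matrix.smul_apply]
  exact mul_nonneg (inv_nonneg.mpr hr0.le) (htinv_nonneg i j)

end Core

lemma isNsMMat_inv_nonneg {n : ℕ} (A : Matrix (Fin n) (Fin n) ℝ) (hA : IsNsMMat A) :
    ∀ i j, 0 ≤ A⁻¹ i j := by
  rcases Nat.eq_zero_or_pos n with hn | hn
  · subst hn; intro i j; exact i.elim0
  haveI : Nonempty (Fin n) := ⟨⟨0, hn⟩⟩
  obtain ⟨⟨s, P, hP, hs, rfl⟩, hdet⟩ := hA
  intro i j
  -- entrywise limit of resolvents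
  set D : ℝ → Matrix (Fin n) (Fin n) ℝ := fun r => r • (1 : Matrix (Fin n) (Fin n) ℝ) - P
    with hDdef
  have hDcont : Continuous D := by
    exact (continuous_id.smul continuous_const).sub continuous_const
  set g : ℝ → ℝ := fun r => (D r).det⁻¹ * (D r).adjugate i j with hgdef
  have hg_eq : ∀ r, (D r)⁻¹ i j = g r := by
    intro r
    rw [Matrix.inv_def, Matrix.smul_apply, Ring.inverse_eq_inv', smul_eq_mul]
  have hdet0 : (D s).det ≠ 0 := by
    have : IsUnit (D s).det := hdet
    exact this.ne_zero
  have hgc : ContinuousAt g s := by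
    have h1 : Continuous fun r => (D r).det := hDcont.matrix_det
    have h2 : Continuous fun r => (D r).adjugate i j :=
      (continuous_apply j).comp ((continuous_apply i).comp hDcont.matrix_adjugate)
    exact ((h1.continuousAt.inv₀ hdet0).mul h2.continuousAt)
  have hlim : Tendsto g (𝓝[>] s) (𝓝 (g s)) := hgc.mono_left nhdsWithin_le_nhds
  have hev : ∀ᶠ r in 𝓝[>] s, 0 ≤ g r := by
    refine eventually_nhdsWithin_of_forall fun r hr => ?_
    rw [← hg_eq]
    exact resolvent_nonneg P hP hs hr i j
  have := ge_of_tendsto hlim hev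
  rw [← hg_eq] at this
  exact this

section Main

variable {n : ℕ}

private lemma mulmono_right {C D D' : Matrix (Fin n) (Fin n) ℝ}
    (hC : ∀ i j, 0 ≤ C i j) (h : ∀ i j, D i j ≤ D' i j) :
    ∀ i j, (C * D) i j ≤ (C * D') i j := by
  intro i j
  rw [Matrix.mul_apply, Matrix.mul_apply]
  exact Finset.sum_le_sum fun k _ => mul_le_mul_of_nonneg_left (h k j) (hC i k)

private lemma mulmono_left {C C' D : Matrix (Fin n) (Fin n) ℝ}
    (hD : ∀ i j, 0 ≤ D i j) (h : ∀ i j, C i j ≤ C' i j) :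
    ∀ i j, (C * D) i j ≤ (C' * D) i j := by
  intro i j
  rw [Matrix.mul_apply, Matrix.mul_apply]
  exact Finset.sum_le_sum fun k _ => mul_le_mul_of_nonneg_right (h i k) (hD k j)

private lemma toMat_mulVec (f : (Fin n → ℝ) →ₗ[ℝ] (Fin n → ℝ)) (v : Fin n → ℝ) :
    LinearMap.toMatrix' f *ᵥ v = f v := by
  rw [← Matrix.toLin'_apply, Matrix.toLin'_toMatrix']

theorem qve_modified_newton_jacobian'
    (M : Matrix (Fin n) (Fin n) ℝ) (hM : IsNsMMat M)
    (a : Fin n → ℝ) (ha : 0 ≤ a)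
    (b : (Fin n → ℝ) →ₗ[ℝ] (Fin n → ℝ) →ₗ[ℝ] (Fin n → ℝ))
    (hb : ∀ x y : Fin n → ℝ, 0 ≤ x → 0 ≤ y → 0 ≤ b x y)
    (xs : Fin n → ℝ) (hxs_nonneg : 0 ≤ xs) (hxs_sol : M *ᵥ xs = a + b xs xs)
    (R : (Fin n → ℝ) → Matrix (Fin n) (Fin n) ℝ)
    (hR : ∀ x, R x = M - LinearMap.toMatrix' (b.flip x))
    (hRns : ∀ y : Fin n → ℝ, 0 ≤ y → y ≤ xs → IsNsMMat (R y))
    (Gder : (Fin n → ℝ) → Matrix (Fin n) (Fin n) ℝ)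
    (hGder : ∀ y, Gder y = 1 - (R y)⁻¹ * LinearMap.toMatrix' (b ((R y)⁻¹ *ᵥ a))) :
    Gder xs =
      (R xs)⁻¹ * (M - LinearMap.toMatrix' (b xs) - LinearMap.toMatrix' (b.flip xs)) ∧
    ∀ x : Fin n → ℝ, 0 ≤ x → x ≤ xs → ∀ i j, Gder xs i j ≤ Gder x i j := by
  have hdet_xs : IsUnit (R xs).det := (hRns xs hxs_nonneg le_rfl).2
  -- R xs *ᵥ xs = a
  have hRa : R xs *ᵥ xs = a := by
    rw [hR, Matrix.sub_mulVec, toMat_mulVec, LinearMap.flip_apply, hxs_sol]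
    abel
  have hinva : (R xs)⁻¹ *ᵥ a = xs := by
    rw [← hRa, Matrix.mulVec_mulVec, Matrix.nonsing_inv_mul _ hdet_xs, Matrix.one_mulVec]
  constructor
  · rw [hGder xs, hinva, show M - LinearMap.toMatrix' (b xs) - LinearMap.toMatrix' (b.flip xs)
      = R xs - LinearMap.toMatrix' (b xs) by rw [hR]; abel,
      Matrix.mul_sub, Matrix.nonsing_inv_mul _ hdet_xs]
  · intro x hx0 hxxs i j
    have hNs_x := hRns x hx0 hxxs
    have hdet_x : IsUnit (R x).det := hNs_x.2
    have hAinv : ∀ i j, 0 ≤ (R x)⁻¹ i j := isNsMMat_inv_nonneg _ hNs_x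
    have hBinv : ∀ i j, 0 ≤ (R xs)⁻¹ i j := isNsMMat_inv_nonneg _ (hRns xs hxs_nonneg le_rfl)
    -- R xs ≤ R x entrywise
    have hAB : ∀ i j, R xs i j ≤ R x i j := by
      intro i j
      rw [hR, hR, Matrix.sub_apply, Matrix.sub_apply]
      have he : (0 : Fin n → ℝ) ≤ fun j' => if j' = j then (1 : ℝ) else 0 := by
        intro k; dsimp only; positivity
      have hd := hb (fun j' => if j' = j then (1 : ℝ) else 0) (xs - x) he
        (by intro k; simpa using hxxs k) i
      rw [map_sub] at hd
      simp only [LinearMap.toMatrix'_apply, LinearMap.flip_apply, Pi.sub_apply, Pi.zero_apply] at hd ⊢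
      rw [show (Pi.single j (1:ℝ) : Fin n → ℝ) = fun j' => if j' = j then (1 : ℝ) else 0 from by
        funext k; simp [Pi.single_apply]] at ⊢
      linarith
    -- (R x)⁻¹ ≤ (R xs)⁻¹ entrywise
    have hkey : (R xs)⁻¹ * (R x - R xs) * (R x)⁻¹ = (R xs)⁻¹ - (R x)⁻¹ := by
      rw [Matrix.mul_sub, Matrix.sub_mul, Matrix.mul_assoc,
        Matrix.mul_nonsing_inv _ hdet_x, Matrix.mul_one,
        Matrix.nonsing_inv_mul _ hdet_xs, Matrix.one_mul]
    have hInvLe : ∀ i j, (R x)⁻¹ i j ≤ (R xs)⁻¹ i j := by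
      intro i j
      have h1 : ∀ i j, 0 ≤ ((R xs)⁻¹ * (R x - R xs)) i j :=
        mul_entry_nonneg hBinv fun i j => by
          rw [Matrix.sub_apply]; linarith [hAB i j]
      have h2 : ∀ i j, 0 ≤ ((R xs)⁻¹ * (R x - R xs) * (R x)⁻¹) i j :=
        mul_entry_nonneg h1 hAinv
      have := h2 i j
      rw [hkey, Matrix.sub_apply] at this
      linarith
    -- v := (R x)⁻¹ *ᵥ a, 0 ≤ v ≤ xs
    set v : Fin n → ℝ := (R x)⁻¹ *ᵥ a with hvdef
    have hv0 : 0 ≤ v := by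
      intro k
      rw [hvdef, Matrix.mulVec, dotProduct]
      exact Finset.sum_nonneg fun l _ => mul_nonneg (hAinv k l) (ha l)
    have hvle : v ≤ xs := by
      intro k
      rw [← hinva, hvdef, Matrix.mulVec, Matrix.mulVec, dotProduct, dotProduct]
      exact Finset.sum_le_sum fun l _ => mul_le_mul_of_nonneg_right (hInvLe k l) (ha l)
    -- entrywise ineq
    rw [hGder x, hGder xs, ← hvdef, hinva, Matrix.sub_apply, Matrix.sub_apply]
    have hTv_le : ∀ i j, LinearMap.toMatrix' (b v) i j ≤ LinearMap.toMatrix' (b xs) i j := by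
      intro i j
      have he : (0 : Fin n → ℝ) ≤ fun j' => if j' = j then (1 : ℝ) else 0 := by
        intro k; dsimp only; positivity
      have hd := hb (xs - v) (fun j' => if j' = j then (1 : ℝ) else 0)
        (by intro k; simpa using hvle k) he i
      rw [map_sub, LinearMap.sub_apply] at hd
      simp only [LinearMap.toMatrix'_apply, Pi.sub_apply, Pi.zero_apply] at hd ⊢
      rw [show (Pi.single j (1:ℝ) : Fin n → ℝ) = fun j' => if j' = j then (1 : ℝ) else 0 from by
        funext k; simp [Pi.single_apply]] at ⊢
      linarith
    have hTxs : ∀ i j, 0 ≤ LinearMap.toMatrix' (b xs) i j := by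
      intro i j
      have he : (0 : Fin n → ℝ) ≤ fun j' => if j' = j then (1 : ℝ) else 0 := by
        intro k; dsimp only; positivity
      have := hb xs (fun j' => if j' = j then (1 : ℝ) else 0) hxs_nonneg he i
      simp only [LinearMap.toMatrix'_apply]
      rw [show (Pi.single j (1:ℝ) : Fin n → ℝ) = fun j' => if j' = j then (1 : ℝ) else 0 from by
        funext k; simp [Pi.single_apply]]
      exact this
    have step1 := mulmono_right hAinv hTv_le i j
    have step2 := mulmono_left hTxs hInvLe i j
    linarith
end Main

/-- For the modified Newton method: with `R_x = M - b(·,x)` and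
`G'_x = I - R_x⁻¹ b(R_x⁻¹ a, ·)`, if `x*` is a nonnegative solution of the QVE and
`R_y` is a nonsingular M-matrix for all `0 ≤ y ≤ x*`, then
`G'_{x*} = R_{x*}⁻¹ F'_{x*}`, and `G'_x ≥ G'_{x*}` entrywise for all `0 ≤ x ≤ x*`. -/
theorem qve_modified_newton_jacobian {n : ℕ}
    (M : Matrix (Fin n) (Fin n) ℝ) (hM : IsNsMMat M)
    (a : Fin n → ℝ) (ha : 0 ≤ a)
    (b : (Fin n → ℝ) →ₗ[ℝ] (Fin n → ℝ) →ₗ[ℝ] (Fin n → ℝ))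
    (hb : ∀ x y : Fin n → ℝ, 0 ≤ x → 0 ≤ y → 0 ≤ b x y)
    (xs : Fin n → ℝ) (hxs_nonneg : 0 ≤ xs) (hxs_sol : M *ᵥ xs = a + b xs xs)
    (R : (Fin n → ℝ) → Matrix (Fin n) (Fin n) ℝ)
    (hR : ∀ x, R x = M - LinearMap.toMatrix' (b.flip x))
    (hRns : ∀ y : Fin n → ℝ, 0 ≤ y → y ≤ xs → IsNsMMat (R y))
    (Gder : (Fin n → ℝ) → Matrix (Fin n) (Fin n) ℝ)
    (hGder : ∀ y, Gder y = 1 - (R y)⁻¹ * LinearMap.toMatrix' (b ((R y)⁻¹ *ᵥ a))) :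
    Gder xs =
      (R xs)⁻¹ * (M - LinearMap.toMatrix' (b xs) - LinearMap.toMatrix' (b.flip xs)) ∧
    ∀ x : Fin n → ℝ, 0 ≤ x → x ≤ xs → ∀ i j, Gder xs i j ≤ Gder x i j := by
  exact qve_modified_newton_jacobian' M hM a ha b hb xs hxs_nonneg hxs_sol R hR hRns Gder hGder
end

section
/- Let M be a nonsingular n×n real matrix, a ∈ ℝⁿ, and b : ℝⁿ × ℝⁿ → ℝⁿ bilinear. If x ∈ ℝⁿ satisfies Mx = a + b(x,x), then v₁ := M⁻¹ b(x,x) satisfies the equation M v₁ − b(M⁻¹a, v₁) − b(v₁, M⁻¹a) = b(M⁻¹a, M⁻¹a) + b(v₁, v₁); equivalently, −b(M⁻¹a, M⁻¹a) + (M − b(M⁻¹a, ·) − b(·, M⁻¹a)) v₁ − b(v₁, v₁) = 0. -/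
open Matrix

/-- Graeffe-type transformation: if `M x = a + b(x,x)` with `M` nonsingular and `b`
bilinear, then `v₁ = M⁻¹ b(x,x)` satisfies
`M v₁ - b(M⁻¹a, v₁) - b(v₁, M⁻¹a) = b(M⁻¹a, M⁻¹a) + b(v₁, v₁)`. -/
theorem qve_graeffe_transformation {n : ℕ}
    (M : Matrix (Fin n) (Fin n) ℝ) (hM : IsUnit M.det)
    (a : Fin n → ℝ)
    (b : (Fin n → ℝ) →ₗ[ℝ] (Fin n → ℝ) →ₗ[ℝ] (Fin n → ℝ))
    (x : Fin n → ℝ) (hx : M *ᵥ x = a + b x x)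
    (v₁ : Fin n → ℝ) (hv₁ : v₁ = M⁻¹ *ᵥ b x x) :
    M *ᵥ v₁ - b (M⁻¹ *ᵥ a) v₁ - b v₁ (M⁻¹ *ᵥ a) =
      b (M⁻¹ *ᵥ a) (M⁻¹ *ᵥ a) + b v₁ v₁ := by
  have h2 : M *ᵥ v₁ = b x x := by
    rw [hv₁, Matrix.mulVec_mulVec, Matrix.mul_nonsing_inv M hM, Matrix.one_mulVec]
  have h1 : M⁻¹ *ᵥ a = x - v₁ := by
    have : a = M *ᵥ x - b x x := by rw [hx]; abel
    rw [this, Matrix.mulVec_sub, Matrix.mulVec_mulVec, Matrix.nonsing_inv_mul M hM,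
      Matrix.one_mulVec, ← hv₁]
  rw [h1, h2]
  have hbx : b x x = b (x - v₁) (x - v₁) + b (x - v₁) v₁ + b v₁ (x - v₁) + b v₁ v₁ := by
    simp only [map_sub, LinearMap.sub_apply]
    abel
  rw [hbx]; abel
end

section
/- Let the QVE Mx = a + b(x,x) have a minimal nonnegative solution x*, and let B be the tensor with b(x,y)_k = Σ_{i,j} B_{ijk} x_i y_j; write (M⁻¹B) for the tensor of the map (x,y) ↦ M⁻¹b(x,y). Call a finite sequence S₁ ⊆ S₂ ⊆ … ⊆ S_N of subsets of {1,…,n} positivity-showing for an index i if: (i) S₁ = {h : (M⁻¹a)_h > 0}; (ii) for each h and each t ∈ S_{h+1} \ S_h there exist r, s ∈ S_h (possibly r = s) with (M⁻¹B)_{rst} > 0; (iii) i ∈ S_N. Then for each i ∈ {1,…,n}, (x*)_i > 0 if and only if there exists a positivity-showing sequence for i. -/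
open Matrix Filter Topology

/-! ### Auxiliary material: nonnegativity of the inverse of a nonsingular M-matrix -/

open scoped ENNReal NNReal Pointwise

attribute [local instance] Matrix.linftyOpNormedAddCommGroup Matrix.linftyOpNormedRing
  Matrix.linftyOpNormedAlgebra
set_option synthInstance.maxHeartbeats 1000000
set_option maxHeartbeats 2000000

lemma specRad_ub {n : ℕ} [Nonempty (Fin n)] (A : Matrix (Fin n) (Fin n) ℝ) :
    0 ≤ specRad A ∧ ∀ μ ∈ spectrum ℂ (A.map (Complex.ofReal)), ‖μ‖ ≤ specRad A := by
  set E := {r : ℝ | ∃ μ ∈ spectrum ℂ (A.map (Complex.ofReal)), ‖μ‖ = r} with hE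
  have hne : E.Nonempty := by
    obtain ⟨μ, hμ⟩ := spectrum.nonempty (A.map (Complex.ofReal))
    exact ⟨‖μ‖, μ, hμ, rfl⟩
  have hbdd : BddAbove E := by
    refine ⟨‖A.map (Complex.ofReal)‖, ?_⟩
    rintro r ⟨μ, hμ, rfl⟩
    exact spectrum.norm_le_norm_of_mem hμ
  constructor
  · obtain ⟨r, μ, hμ, rfl⟩ := hne
    exact le_trans (norm_nonneg μ) (le_csSup hbdd ⟨μ, hμ, rfl⟩)
  · intro μ hμ
    exact le_csSup hbdd ⟨μ, hμ, rfl⟩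

lemma entries_nonneg_mul {n : ℕ} {A B : Matrix (Fin n) (Fin n) ℝ}
    (hA : ∀ i j, 0 ≤ A i j) (hB : ∀ i j, 0 ≤ B i j) : ∀ i j, 0 ≤ (A * B) i j := by
  intro i j
  rw [Matrix.mul_apply]
  exact Finset.sum_nonneg fun k _ => mul_nonneg (hA i k) (hB k j)

lemma entries_nonneg_pow {n : ℕ} {A : Matrix (Fin n) (Fin n) ℝ}
    (hA : ∀ i j, 0 ≤ A i j) : ∀ k : ℕ, ∀ i j, 0 ≤ (A ^ k) i j ∨ k = 0 := by
  intro k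
  induction k with
  | zero => exact fun i j => Or.inr rfl
  | succ k ih =>
    refine fun i j => Or.inl ?_
    rcases Nat.eq_zero_or_pos k with h | h
    · subst h; simpa [pow_one] using hA i j
    · rw [pow_succ]
      refine entries_nonneg_mul (fun i j => ?_) hA i j
      rcases ih i j with h' | h'
      · exact h'
      · omega

lemma entry_nnnorm_le {n : ℕ} (A : Matrix (Fin n) (Fin n) ℝ) (i j : Fin n) : ‖A i j‖ ≤ ‖A‖ := by
  have : ‖A i j‖₊ ≤ ‖A‖₊ := by
    rw [Matrix.linfty_opNNNorm_def]
    exact le_trans (Finset.single_le_sum (f := fun j => ‖A i j‖₊) (fun _ _ => zero_le)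
      (Finset.mem_univ j)) (Finset.le_sup (f := fun i => ∑ j, ‖A i j‖₊) (Finset.mem_univ i))
  exact_mod_cast this

noncomputable def entryCLM {n : ℕ} (i j : Fin n) : Matrix (Fin n) (Fin n) ℝ →L[ℝ] ℝ :=
  LinearMap.mkContinuous
    { toFun := fun A => A i j
      map_add' := fun A B => rfl
      map_smul' := fun c A => rfl } 1
    (fun A => by show ‖A i j‖ ≤ 1 * ‖A‖; simpa using entry_nnnorm_le A i j)

lemma key_inv_nonneg {n : ℕ} [Nonempty (Fin n)] (P : Matrix (Fin n) (Fin n) ℝ)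
    (hP : ∀ i j, 0 ≤ P i j) (s' : ℝ) (hs' : specRad P < s') :
    IsUnit (s' • (1 : Matrix (Fin n) (Fin n) ℝ) - P).det ∧
      ∀ i j, 0 ≤ ((s' • (1 : Matrix (Fin n) (Fin n) ℝ) - P)⁻¹) i j := by
  obtain ⟨hr0, hub⟩ := specRad_ub P
  have hs0 : 0 < s' := lt_of_le_of_lt hr0 hs'
  set Q : Matrix (Fin n) (Fin n) ℝ := s'⁻¹ • P with hQdef
  have hQ : ∀ i j, 0 ≤ Q i j := fun i j => mul_nonneg (inv_nonneg.mpr hs0.le) (hP i j)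
  set Pc := P.map (Complex.ofReal) with hPc
  have hQc : Q.map (Complex.ofReal) = (s'⁻¹ : ℂ) • Pc := by
    ext i j
    simp only [hQdef, Matrix.map_apply, Matrix.smul_apply, smul_eq_mul, hPc]
    push_cast
    ring
  -- spectrum bound for Q
  have hspecQ : ∀ μ ∈ spectrum ℂ (Q.map (Complex.ofReal)), ‖μ‖ ≤ specRad P / s' := by
    intro μ hμ
    rw [hQc] at hμ
    have hne : (s'⁻¹ : ℂ) ≠ 0 := by exact_mod_cast inv_ne_zero hs0.ne'
    have heq : spectrum ℂ ((Units.mk0 (s'⁻¹ : ℂ) hne) • Pc)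
        = (Units.mk0 (s'⁻¹ : ℂ) hne) • spectrum ℂ Pc := spectrum.unit_smul_eq_smul Pc _
    have hμ' : μ ∈ (Units.mk0 (s'⁻¹ : ℂ) hne) • spectrum ℂ Pc := by
      rw [← heq]
      exact hμ
    obtain ⟨ν, hν, hμeq⟩ := hμ'
    have hμeq' : μ = (s'⁻¹ : ℂ) * ν := by rw [← hμeq]; simp [Units.smul_def]
    rw [hμeq', norm_mul, norm_inv, Complex.norm_real, Real.norm_eq_abs, abs_of_pos hs0,
      div_eq_inv_mul]
    exact mul_le_mul_of_nonneg_left (hub ν hν) (inv_nonneg.mpr hs0.le)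
  -- spectral radius of Qc < 1
  have hsrQ : spectralRadius ℂ (Q.map (Complex.ofReal)) < 1 := by
    have hlt : specRad P / s' < 1 := (div_lt_one hs0).mpr hs'
    have hle : spectralRadius ℂ (Q.map (Complex.ofReal)) ≤ ENNReal.ofReal (specRad P / s') := by
      rw [spectralRadius]
      refine iSup₂_le fun μ hμ => ?_
      rw [← ENNReal.ofReal_coe_nnreal, coe_nnnorm]
      exact ENNReal.ofReal_le_ofReal (hspecQ μ hμ)
    exact lt_of_le_of_lt hle (by rwa [ENNReal.ofReal_lt_one])
  -- Gelfand's formula: find m ≥ 1 with ‖Qc^m‖ < 1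
  obtain ⟨m, hm1, hmlt⟩ : ∃ m : ℕ, 1 ≤ m ∧
      ((‖(Q.map (Complex.ofReal)) ^ m‖₊ : ℝ≥0∞) ^ (1 / (m : ℝ))) < 1 := by
    have := (spectrum.pow_nnnorm_pow_one_div_tendsto_nhds_spectralRadius
      (Q.map (Complex.ofReal))).eventually_lt_const hsrQ
    exact ((eventually_ge_atTop 1).and this).exists
  have hQm : ‖Q ^ m‖ < 1 := by
    have hmap : (Q.map (Complex.ofReal)) ^ m = (Q ^ m).map (Complex.ofReal) := by
      have := map_pow (Complex.ofRealHom.mapMatrix (m := Fin n)) Q m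
      exact this.symm
    have hnn : ‖(Q.map (Complex.ofReal)) ^ m‖₊ = ‖Q ^ m‖₊ := by
      rw [hmap]
      simp [Matrix.linfty_opNNNorm_def, Matrix.map]
    rw [hnn] at hmlt
    have hm0 : (m : ℝ) ≠ 0 := by exact_mod_cast Nat.one_le_iff_ne_zero.mp hm1
    have hcoe : ((‖Q ^ m‖₊ : ℝ≥0∞)) < 1 := by
      have h2 : ((‖Q ^ m‖₊ : ℝ≥0∞)) = (((‖Q ^ m‖₊ : ℝ≥0∞)) ^ (1 / (m : ℝ))) ^ (m : ℝ) := by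
        rw [← ENNReal.rpow_mul, one_div, inv_mul_cancel₀ hm0, ENNReal.rpow_one]
      rw [h2]
      exact ENNReal.rpow_lt_one hmlt (by positivity)
    have h3 : ‖Q ^ m‖₊ < 1 := by exact_mod_cast hcoe
    rw [← coe_nnnorm (Q ^ m)]
    exact_mod_cast h3
  -- Neumann series
  set R := Q ^ m with hRdef
  have hRnn : ∀ i j, 0 ≤ R i j := fun i j => by
    rcases entries_nonneg_pow hQ m i j with h | h
    · exact h
    · omega
  have hsum : Summable (fun k : ℕ => R ^ k) := summable_geometric_of_norm_lt_one hQm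
  set S := ∑' k : ℕ, R ^ k with hSdef
  have hS2 : (1 - R) * S = 1 := mul_neg_geom_series R hQm
  have hSnn : ∀ i j, 0 ≤ S i j := by
    intro i j
    have : S i j = ∑' k : ℕ, (R ^ k) i j := by
      have := (entryCLM i j).map_tsum hsum
      exact this
    rw [this]
    refine tsum_nonneg fun k => ?_
    rcases entries_nonneg_pow hRnn k i j with h | h
    · exact h
    · subst h; by_cases hij : i = j <;> simp [Matrix.one_apply, hij]
  -- geometric partial sum
  set G := ∑ k ∈ Finset.range m, Q ^ k with hGdef
  have hGnn : ∀ i j, 0 ≤ G i j := by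
    intro i j
    rw [hGdef]
    have : (∑ k ∈ Finset.range m, Q ^ k) i j = ∑ k ∈ Finset.range m, (Q ^ k) i j := by
      simp [Matrix.sum_apply]
    rw [this]
    refine Finset.sum_nonneg fun k _ => ?_
    rcases entries_nonneg_pow hQ k i j with h | h
    · exact h
    · subst h; by_cases hij : i = j <;> simp [Matrix.one_apply, hij]
  have hgeom : (1 - Q) * G = 1 - R := by
    have h := mul_geom_sum Q m
    have : (1 - Q) * G = -((Q - 1) * G) := by
      rw [sub_mul, sub_mul, one_mul]; abel
    rw [this, hGdef, h, hRdef]; abel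
  set B := G * S with hBdef
  have hBnn : ∀ i j, 0 ≤ B i j := entries_nonneg_mul hGnn hSnn
  have hright : (1 - Q) * B = 1 := by
    rw [hBdef, ← mul_assoc, hgeom, hS2]
  -- back to s' • 1 - P
  have hfact : s' • (1 : Matrix (Fin n) (Fin n) ℝ) - P
      = s' • ((1 : Matrix (Fin n) (Fin n) ℝ) - Q) := by
    rw [smul_sub, hQdef, smul_smul, mul_inv_cancel₀ hs0.ne', one_smul]
  have hright' : (s' • (1 : Matrix (Fin n) (Fin n) ℝ) - P) * (s'⁻¹ • B) = 1 := by
    rw [hfact, Matrix.smul_mul, Matrix.mul_smul, smul_smul, mul_inv_cancel₀ hs0.ne', one_smul,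
      hright]
  refine ⟨Matrix.isUnit_det_of_right_inverse hright', ?_⟩
  intro i j
  rw [Matrix.inv_eq_right_inv hright']
  exact mul_nonneg (inv_nonneg.mpr hs0.le) (hBnn i j)

lemma mmat_inv_nonneg {n : ℕ} [Nonempty (Fin n)] (M : Matrix (Fin n) (Fin n) ℝ)
    (hM : IsNsMMat M) : ∀ i j, 0 ≤ M⁻¹ i j := by
  obtain ⟨⟨s, P, hP, hsr, rfl⟩, hdet⟩ := hM
  intro i j
  set F : ℝ → Matrix (Fin n) (Fin n) ℝ := fun t => t • (1 : Matrix (Fin n) (Fin n) ℝ) - P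
    with hF
  have hFc : Continuous F := by
    apply Continuous.sub _ continuous_const
    exact continuous_id.smul continuous_const
  have key : ∀ t : ℝ, ((F t)⁻¹) i j = ((F t).det)⁻¹ * (F t).adjugate i j := by
    intro t
    rw [Matrix.inv_def, Ring.inverse_eq_inv]
    simp [Matrix.smul_apply, smul_eq_mul]
  set g : ℝ → ℝ := fun t => ((F t).det)⁻¹ * (F t).adjugate i j with hg
  have hd0 : (F s).det ≠ 0 := by
    simpa [hF] using hdet.ne_zero
  have hgc : ContinuousAt g s := by
    apply ContinuousAt.mul
    · exact (hFc.matrix_det.continuousAt).inv₀ hd0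
    · exact (((continuous_apply j).comp ((continuous_apply i).comp
        hFc.matrix_adjugate)).continuousAt)
  have htb : Tendsto g (𝓝[>] s) (𝓝 (g s)) :=
    tendsto_nhdsWithin_of_tendsto_nhds hgc.tendsto
  have hev : ∀ᶠ t in 𝓝[>] s, 0 ≤ g t := by
    refine eventually_nhdsWithin_of_forall fun t ht => ?_
    have hst : specRad P < t := lt_of_le_of_lt hsr ht
    have h1 := (key_inv_nonneg P hP t hst).2 i j
    have h2 : g t = (F t)⁻¹ i j := (key t).symm
    rw [h2]
    exact h1
  have h0 : 0 ≤ g s := ge_of_tendsto htb hev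
  have h2 : g s = (F s)⁻¹ i j := (key s).symm
  rw [h2] at h0
  exact h0

/-! ### Auxiliary material: the reachability closure and the Kleene iteration -/

/-- One step of the reachability closure. -/
def qveStep {n : ℕ} (K : Fin n → Fin n → Fin n → ℝ) (A : Set (Fin n)) : Set (Fin n) :=
  A ∪ {t | ∃ r ∈ A, ∃ s ∈ A, 0 < K r s t}

lemma qve_aux {n : ℕ} (c : Fin n → ℝ) (hc : ∀ t, 0 ≤ c t)
    (K : Fin n → Fin n → Fin n → ℝ) (hK : ∀ r s t, 0 ≤ K r s t)
    (xs : Fin n → ℝ) (hxs : ∀ t, 0 ≤ xs t)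
    (hfix : ∀ t, xs t = c t + ∑ r, ∑ s, xs r * xs s * K r s t)
    (hmin : ∀ y : Fin n → ℝ, (∀ t, 0 ≤ y t) →
      (∀ t, y t = c t + ∑ r, ∑ s, y r * y s * K r s t) → ∀ t, xs t ≤ y t)
    (i : Fin n) (hi : 0 < xs i) :
    ∃ k : ℕ, i ∈ (qveStep K)^[k] {h | 0 < c h} := by
  set U : ℕ → Set (Fin n) := fun k => (qveStep K)^[k] {h | 0 < c h} with hU
  by_contra hcon
  push_neg at hcon
  set T : Set (Fin n) := ⋃ k, U k with hT
  have hUsucc : ∀ k, U k ⊆ U (k + 1) := by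
    intro k
    have : U (k+1) = qveStep K (U k) := Function.iterate_succ_apply' _ _ _
    rw [this]
    exact Set.subset_union_left
  have hUmono : Monotone U := monotone_nat_of_le_succ hUsucc
  have hbaseT : {h | 0 < c h} ⊆ T := by
    intro h hh
    exact Set.mem_iUnion.mpr ⟨0, hh⟩
  have hTclosed : ∀ r ∈ T, ∀ s ∈ T, ∀ t, 0 < K r s t → t ∈ T := by
    intro r hr s hs t hKt
    obtain ⟨k₁, hk₁⟩ := Set.mem_iUnion.mp hr
    obtain ⟨k₂, hk₂⟩ := Set.mem_iUnion.mp hs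
    refine Set.mem_iUnion.mpr ⟨max k₁ k₂ + 1, ?_⟩
    have h1 : r ∈ U (max k₁ k₂) := hUmono (le_max_left _ _) hk₁
    have h2 : s ∈ U (max k₁ k₂) := hUmono (le_max_right _ _) hk₂
    have : U (max k₁ k₂ + 1) = qveStep K (U (max k₁ k₂)) := Function.iterate_succ_apply' _ _ _
    rw [this]
    exact Or.inr ⟨r, h1, s, h2, hKt⟩
  have hiT : i ∉ T := by
    intro hiT
    obtain ⟨k, hk⟩ := Set.mem_iUnion.mp hiT
    exact hcon k hk
  -- the Kleene iteration
  set Φ : (Fin n → ℝ) → (Fin n → ℝ) :=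
    fun v => fun t => c t + ∑ r, ∑ s, v r * v s * K r s t with hΦ
  set x : ℕ → (Fin n → ℝ) := fun m => Φ^[m] 0 with hx
  have hxsucc : ∀ m, x (m + 1) = Φ (x m) := fun m => Function.iterate_succ_apply' _ _ _
  have hΦmono : ∀ v w : Fin n → ℝ, (∀ t, 0 ≤ v t) → (∀ t, v t ≤ w t) → ∀ t, Φ v t ≤ Φ w t := by
    intro v w hv hvw t
    refine add_le_add (le_refl _) (Finset.sum_le_sum fun r _ => Finset.sum_le_sum fun s _ => ?_)
    have h1 : 0 ≤ v r := hv r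
    have h2 : 0 ≤ v s := hv s
    refine mul_le_mul_of_nonneg_right ?_ (hK r s t)
    exact mul_le_mul (hvw r) (hvw s) h2 (le_trans h1 (hvw r))
  have hΦnn : ∀ v : Fin n → ℝ, (∀ t, 0 ≤ v t) → ∀ t, 0 ≤ Φ v t := by
    intro v hv t
    refine add_nonneg (hc t) (Finset.sum_nonneg fun r _ => Finset.sum_nonneg fun s _ => ?_)
    exact mul_nonneg (mul_nonneg (hv r) (hv s)) (hK r s t)
  have hxnn : ∀ m t, 0 ≤ x m t := by
    intro m
    induction m with
    | zero => intro t; simp [hx]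
    | succ m ih => intro t; rw [hxsucc]; exact hΦnn _ ih t
  have hxle : ∀ m t, x m t ≤ xs t := by
    intro m
    induction m with
    | zero => intro t; simpa [hx] using hxs t
    | succ m ih =>
      intro t
      rw [hxsucc]
      calc Φ (x m) t ≤ Φ xs t := hΦmono _ _ (hxnn m) ih t
        _ = xs t := (hfix t).symm
  have hxmono : ∀ m t, x m t ≤ x (m + 1) t := by
    intro m
    induction m with
    | zero => intro t; rw [hxsucc]; simpa [hx] using hΦnn 0 (fun _ => le_refl 0) t
    | succ m ih =>
      intro t
      rw [hxsucc, hxsucc]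
      exact hΦmono _ _ (hxnn m) ih t
  have hxsupp : ∀ m t, t ∉ T → x m t = 0 := by
    intro m
    induction m with
    | zero => intro t _; simp [hx]
    | succ m ih =>
      intro t ht
      rw [hxsucc]
      have hct : c t = 0 := by
        rcases eq_or_lt_of_le (hc t) with h | h
        · exact h.symm
        · exact absurd (hbaseT h) ht
      have hterm : ∀ r s : Fin n, x m r * x m s * K r s t = 0 := by
        intro r s
        rcases eq_or_lt_of_le (hxnn m r) with hr | hr
        · rw [← hr]; ring
        rcases eq_or_lt_of_le (hxnn m s) with hs | hs
        · rw [← hs]; ring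
        have hrT : r ∈ T := by
          by_contra hrT
          rw [ih r hrT] at hr
          exact lt_irrefl 0 hr
        have hsT : s ∈ T := by
          by_contra hsT
          rw [ih s hsT] at hs
          exact lt_irrefl 0 hs
        have : K r s t = 0 := by
          rcases eq_or_lt_of_le (hK r s t) with h | h
          · exact h.symm
          · exact absurd (hTclosed r hrT s hsT t h) ht
        rw [this]; ring
      simp only [hΦ, hct, zero_add]
      rw [Finset.sum_eq_zero fun r _ => Finset.sum_eq_zero fun s _ => hterm r s]
  -- convergence
  set xI : Fin n → ℝ := fun t => ⨆ m, x m t with hxI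
  have hmonot : ∀ t, Monotone fun m => x m t := fun t =>
    monotone_nat_of_le_succ fun m => hxmono m t
  have hbdd : ∀ t, BddAbove (Set.range fun m => x m t) := by
    intro t
    exact ⟨xs t, by rintro y ⟨m, rfl⟩; exact hxle m t⟩
  have htend : ∀ t, Tendsto (fun m => x m t) atTop (𝓝 (xI t)) := fun t =>
    tendsto_atTop_ciSup (hmonot t) (hbdd t)
  have hxInn : ∀ t, 0 ≤ xI t := by
    intro t
    have := le_ciSup (hbdd t) 0
    exact le_trans (hxnn 0 t) this
  have hxIfix : ∀ t, xI t = c t + ∑ r, ∑ s, xI r * xI s * K r s t := by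
    intro t
    have h1 : Tendsto (fun m => x (m + 1) t) atTop (𝓝 (xI t)) :=
      (htend t).comp (tendsto_add_atTop_nat 1)
    have h2 : Tendsto (fun m => Φ (x m) t) atTop
        (𝓝 (c t + ∑ r, ∑ s, xI r * xI s * K r s t)) := by
      simp only [hΦ]
      refine Tendsto.const_add _ ?_
      refine tendsto_finset_sum _ fun r _ => tendsto_finset_sum _ fun s _ => ?_
      exact (((htend r).mul (htend s)).mul tendsto_const_nhds)
    have h3 : (fun m => x (m + 1) t) = fun m => Φ (x m) t := by
      funext m; rw [hxsucc]
    rw [h3] at h1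
    exact tendsto_nhds_unique h1 h2
  have hximin : ∀ t, xs t ≤ xI t := hmin xI hxInn hxIfix
  have hxIi : xI i = 0 := by
    have : (fun m => x m i) = fun _ => (0:ℝ) := funext fun m => hxsupp m i hiT
    rw [hxI]
    simp only [this]
    exact ciSup_const
  have := hximin i
  rw [hxIi] at this
  exact absurd hi (not_lt.mpr this)

lemma bilin_expand {n : ℕ} (b : (Fin n → ℝ) →ₗ[ℝ] (Fin n → ℝ) →ₗ[ℝ] (Fin n → ℝ))
    (L : (Fin n → ℝ) →ₗ[ℝ] (Fin n → ℝ)) (x y : Fin n → ℝ) (t : Fin n) :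
    L (b x y) t = ∑ r, ∑ s, x r * y s * L (b (Pi.single r 1) (Pi.single s 1)) t := by
  have hx : (∑ r, x r • (Pi.single r 1 : Fin n → ℝ)) = x := by
    funext u
    simp [Finset.sum_apply, Pi.single_apply, Finset.sum_ite_eq, eq_comm]
  have hy : (∑ s, y s • (Pi.single s 1 : Fin n → ℝ)) = y := by
    funext u
    simp [Finset.sum_apply, Pi.single_apply, Finset.sum_ite_eq, eq_comm]
  conv_lhs => rw [← hx, ← hy]
  simp only [map_sum, _root_.map_smul, LinearMap.coe_sum, Finset.sum_apply,
    LinearMap.smul_apply, Pi.smul_apply, smul_eq_mul]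
  simp only [Finset.mul_sum]
  refine Eq.trans Finset.sum_comm ?_
  refine Finset.sum_congr rfl fun r _ => ?_
  refine Finset.sum_congr rfl fun s _ => ?_
  ring

/-- Characterization of the positive entries of the minimal solution `x*` of the QVE:
`(x*)_i > 0` iff there is a "positivity-showing" sequence of index sets
`S₁ ⊆ S₂ ⊆ … ⊆ S_N` with `S₁ = {h : (M⁻¹a)_h > 0}`, each new index `t ∈ S_{h+1} \ S_h`
witnessed by `r, s ∈ S_h` with `(M⁻¹B)_{rst} > 0`, and `i ∈ S_N`.
Here `(M⁻¹B)_{rst} = (M⁻¹ b(e_r, e_s))_t`. -/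
theorem qve_positivity_pattern {n : ℕ}
    (M : Matrix (Fin n) (Fin n) ℝ) (hM : IsNsMMat M)
    (a : Fin n → ℝ) (ha : 0 ≤ a)
    (b : (Fin n → ℝ) →ₗ[ℝ] (Fin n → ℝ) →ₗ[ℝ] (Fin n → ℝ))
    (hb : ∀ x y : Fin n → ℝ, 0 ≤ x → 0 ≤ y → 0 ≤ b x y)
    (xs : Fin n → ℝ) (hxs_nonneg : 0 ≤ xs) (hxs_sol : M *ᵥ xs = a + b xs xs)
    (hxs_min : ∀ s : Fin n → ℝ, 0 ≤ s → M *ᵥ s = a + b s s → xs ≤ s)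
    (i : Fin n) :
    0 < xs i ↔
      ∃ (N : ℕ) (S : ℕ → Set (Fin n)),
        1 ≤ N ∧
        S 1 = {h : Fin n | 0 < (M⁻¹ *ᵥ a) h} ∧
        (∀ h, 1 ≤ h → h < N → S h ⊆ S (h + 1)) ∧
        (∀ h, 1 ≤ h → h < N → ∀ t ∈ S (h + 1) \ S h,
          ∃ r ∈ S h, ∃ s ∈ S h,
            0 < (M⁻¹ *ᵥ b (Pi.single r 1) (Pi.single s 1)) t) ∧
        i ∈ S N := by
  haveI : Nonempty (Fin n) := ⟨i⟩
  have hdet : IsUnit M.det := hM.2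
  have hWnn : ∀ p q, 0 ≤ M⁻¹ p q := mmat_inv_nonneg M hM
  have hmulnn : ∀ v : Fin n → ℝ, 0 ≤ v → ∀ t, 0 ≤ (M⁻¹ *ᵥ v) t := by
    intro v hv t
    simp only [Matrix.mulVec, dotProduct]
    exact Finset.sum_nonneg fun k _ => mul_nonneg (hWnn t k) (hv k)
  set c : Fin n → ℝ := M⁻¹ *ᵥ a with hc_def
  set K : Fin n → Fin n → Fin n → ℝ :=
    fun r s t => (M⁻¹ *ᵥ b (Pi.single r 1) (Pi.single s 1)) t with hK_def
  have hsingle_nn : ∀ r : Fin n, (0 : Fin n → ℝ) ≤ Pi.single r 1 := by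
    intro r u
    by_cases h : u = r <;> simp [Pi.single_apply, h]
  have hc : ∀ t, 0 ≤ c t := fun t => hmulnn a ha t
  have hK : ∀ r s t, 0 ≤ K r s t := fun r s t =>
    hmulnn _ (hb _ _ (hsingle_nn r) (hsingle_nn s)) t
  have hxs_nn : ∀ t, 0 ≤ xs t := fun t => hxs_nonneg t
  -- the expansion of M⁻¹ *ᵥ b x y
  have hexp : ∀ (x y : Fin n → ℝ) (t : Fin n),
      (M⁻¹ *ᵥ b x y) t = ∑ r, ∑ s, x r * y s * K r s t := by
    intro x y t
    have := bilin_expand b (Matrix.mulVecLin M⁻¹) x y t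
    simpa [Matrix.mulVecLin_apply, hK_def] using this
  -- fixed point equations
  have hfix_of_sol : ∀ y : Fin n → ℝ, M *ᵥ y = a + b y y →
      ∀ t, y t = c t + ∑ r, ∑ s, y r * y s * K r s t := by
    intro y hy t
    have h1 : y = M⁻¹ *ᵥ (a + b y y) := by
      rw [← hy, Matrix.mulVec_mulVec, Matrix.nonsing_inv_mul M hdet, Matrix.one_mulVec]
    have h2 : y t = (M⁻¹ *ᵥ a) t + (M⁻¹ *ᵥ b y y) t := by
      conv_lhs => rw [h1]
      rw [Matrix.mulVec_add]
      rfl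
    rw [h2, hexp y y t]
  have hsol_of_fix : ∀ y : Fin n → ℝ,
      (∀ t, y t = c t + ∑ r, ∑ s, y r * y s * K r s t) → M *ᵥ y = a + b y y := by
    intro y hy
    have h1 : y = M⁻¹ *ᵥ (a + b y y) := by
      funext t
      rw [Matrix.mulVec_add]
      have : (M⁻¹ *ᵥ a + M⁻¹ *ᵥ b y y) t = (M⁻¹ *ᵥ a) t + (M⁻¹ *ᵥ b y y) t := rfl
      rw [this, hexp y y t]
      exact hy t
    conv_lhs => rw [h1]
    rw [Matrix.mulVec_mulVec, Matrix.mul_nonsing_inv M hdet, Matrix.one_mulVec]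
  have hfix : ∀ t, xs t = c t + ∑ r, ∑ s, xs r * xs s * K r s t :=
    hfix_of_sol xs hxs_sol
  have hmin : ∀ y : Fin n → ℝ, (∀ t, 0 ≤ y t) →
      (∀ t, y t = c t + ∑ r, ∑ s, y r * y s * K r s t) → ∀ t, xs t ≤ y t := by
    intro y hy hyfix t
    exact hxs_min y (fun u => hy u) (hsol_of_fix y hyfix) t
  constructor
  · -- forward direction: positivity implies a positivity-showing sequence
    intro hpos
    obtain ⟨k, hk⟩ := qve_aux c hc K hK xs hxs_nn hfix hmin i hpos
    refine ⟨k + 1, fun h => (qveStep K)^[h - 1] {h' | 0 < c h'},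
      Nat.le_add_left 1 k, ?_, ?_, ?_, ?_⟩
    · rfl
    · intro h h1 _
      show (qveStep K)^[h - 1] {h' | 0 < c h'} ⊆ (qveStep K)^[h + 1 - 1] {h' | 0 < c h'}
      have he : h + 1 - 1 = (h - 1) + 1 := by omega
      rw [he, Function.iterate_succ_apply']
      exact Set.subset_union_left
    · intro h h1 _ t ht
      have ht' : t ∈ (qveStep K)^[h + 1 - 1] {h' | 0 < c h'}
          \ (qveStep K)^[h - 1] {h' | 0 < c h'} := ht
      have he : h + 1 - 1 = (h - 1) + 1 := by omega
      rw [he, Function.iterate_succ_apply'] at ht'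
      obtain ⟨htin, htout⟩ := ht'
      rcases htin with h' | h'
      · exact absurd h' htout
      · obtain ⟨r, hr, s, hs, hKt⟩ := h'
        exact ⟨r, hr, s, hs, hKt⟩
    · show i ∈ (qveStep K)^[k + 1 - 1] {h' | 0 < c h'}
      simpa using hk
  · -- backward direction: a positivity-showing sequence implies positivity
    rintro ⟨N, S, hN1, hS1, _, hwit, hiN⟩
    have hge_c : ∀ t, c t ≤ xs t := by
      intro t
      rw [hfix t]
      refine le_add_of_nonneg_right ?_
      exact Finset.sum_nonneg fun r _ => Finset.sum_nonneg fun s _ =>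
        mul_nonneg (mul_nonneg (hxs_nn r) (hxs_nn s)) (hK r s t)
    have hterm : ∀ r s t, xs r * xs s * K r s t ≤ xs t := by
      intro r s t
      rw [hfix t]
      have h1 : xs r * xs s * K r s t ≤ ∑ s', xs r * xs s' * K r s' t :=
        Finset.single_le_sum (f := fun s' => xs r * xs s' * K r s' t)
          (fun s' _ => mul_nonneg (mul_nonneg (hxs_nn r) (hxs_nn s')) (hK r s' t))
          (Finset.mem_univ s)
      have h2 : (∑ s', xs r * xs s' * K r s' t) ≤ ∑ r', ∑ s', xs r' * xs s' * K r' s' t :=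
        Finset.single_le_sum (f := fun r' => ∑ s', xs r' * xs s' * K r' s' t)
          (fun r' _ => Finset.sum_nonneg fun s' _ =>
            mul_nonneg (mul_nonneg (hxs_nn r') (hxs_nn s')) (hK r' s' t))
          (Finset.mem_univ r)
      have h3 := hc t
      linarith
    have claim : ∀ h, 1 ≤ h → h ≤ N → ∀ t ∈ S h, 0 < xs t := by
      intro h h1
      induction h, h1 using Nat.le_induction with
      | base =>
        intro _ t ht
        rw [hS1] at ht
        exact lt_of_lt_of_le ht (hge_c t)
      | succ h hh ih =>
        intro hN t ht
        by_cases htS : t ∈ S h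
        · exact ih (by omega) t htS
        · obtain ⟨r, hr, s, hs, hKt⟩ := hwit h hh (by omega) t ⟨ht, htS⟩
          have hxr : 0 < xs r := ih (by omega) r hr
          have hxss : 0 < xs s := ih (by omega) s hs
          have : 0 < xs r * xs s * K r s t := by positivity
          exact lt_of_lt_of_le this (hterm r s t)
    exact claim N hN1 le_rfl i hiN
end
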